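/- Let k ≥ 1 be fixed and let N be a level-k phylogenetic network with n leaves. Then N has at most n + (n−1)(3k−1) + (2n−2) vertices and at most (2n−2) + (n−1)(9k−3)/2 + (2n−2) arcs; in particular, N has O(n) vertices and O(n) arcs. -/

import Mathlib

/-!
Common definitions for formalizing "Constructing the Simplest Possible
Phylogenetic Network from Triplets" (van Iersel, Kelk).

A directed graph on a vertex type `V` is given by its arc set `A : Set (V × V)`.
-/

namespace Phylo

variable {V L : Type}

/-- In-degree of a vertex. -/
noncomputable def indeg (A : Set (V × V)) (v : V) : ℕ := {u | (u, v) ∈ A}.ncard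

/-- Out-degree of a vertex. -/
noncomputable def outdeg (A : Set (V × V)) (v : V) : ℕ := {w | (v, w) ∈ A}.ncard

/-- The root: indegree 0 and outdegree 2. -/
def IsRoot (A : Set (V × V)) (v : V) : Prop := indeg A v = 0 ∧ outdeg A v = 2

/-- A split vertex: indegree 1 and outdegree 2. -/
def IsSplit (A : Set (V × V)) (v : V) : Prop := indeg A v = 1 ∧ outdeg A v = 2

/-- A reticulation vertex: indegree 2 and outdegree 1. -/
def IsRetic (A : Set (V × V)) (v : V) : Prop := indeg A v = 2 ∧ outdeg A v = 1

/-- A leaf vertex: indegree 1 and outdegree 0. -/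
def IsLeafV (A : Set (V × V)) (v : V) : Prop := indeg A v = 1 ∧ outdeg A v = 0

/-- Directed reachability (reflexive-transitive closure of the arc relation). -/
def Reaches (A : Set (V × V)) : V → V → Prop :=
  Relation.ReflTransGen fun u v => (u, v) ∈ A

/-- A directed graph is acyclic if it has no directed cycle. -/
def Acyclic (A : Set (V × V)) : Prop := ∀ u v, (u, v) ∈ A → ¬ Reaches A v u

/-- Adjacency in the underlying undirected graph. -/
def UAdj (A : Set (V × V)) (u v : V) : Prop := (u, v) ∈ A ∨ (v, u) ∈ A

/-- The underlying undirected graph is connected (on all of `V`). -/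
def ConnectedGraph (A : Set (V × V)) : Prop :=
  ∀ u v : V, Relation.ReflTransGen (UAdj A) u v

/-- Undirected connectivity within a set `S` of vertices (in the induced subgraph). -/
def ConnWithin (A : Set (V × V)) (S : Set V) : Prop :=
  ∀ u ∈ S, ∀ v ∈ S, Relation.ReflTransGen (fun a b => a ∈ S ∧ b ∈ S ∧ UAdj A a b) u v

/-- A set of at least two vertices inducing a biconnected subgraph: it is connected
and stays connected after removal of any single vertex. -/
def Biconnected (A : Set (V × V)) (S : Set V) : Prop :=
  2 ≤ S.ncard ∧ ConnWithin A S ∧ ∀ w ∈ S, ConnWithin A (S \ {w})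

/-- A biconnected component: a maximal biconnected subgraph. -/
def BiconnComp (A : Set (V × V)) (S : Set V) : Prop :=
  Biconnected A S ∧ ∀ S', Biconnected A S' → S ⊆ S' → S' = S

/-- The arcs leaving a set of vertices. -/
def outArcs (A : Set (V × V)) (S : Set V) : Set (V × V) :=
  {a ∈ A | a.1 ∈ S ∧ a.2 ∉ S}

/-- A phylogenetic network on the (finite) vertex type `V` with leaves labelled by
elements of `L`: a directed acyclic graph with exactly one vertex of indegree 0
and outdegree 2 (the root), all other vertices being split vertices, reticulation
vertices or leaves; leaves are distinctly labelled.  Moreover (to avoid redundant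
networks) every nontrivial biconnected component has at least three outgoing arcs. -/
structure PhyloNetwork (V L : Type) : Type where
  vfin : Finite V
  arcs : Set (V × V)
  lab : V → L
  acyclic : Acyclic arcs
  root_ex : ∃ r, IsRoot arcs r
  root_unique : ∀ r r', IsRoot arcs r → IsRoot arcs r' → r = r'
  vertex_type : ∀ v, IsRoot arcs v ∨ IsSplit arcs v ∨ IsRetic arcs v ∨ IsLeafV arcs v
  lab_inj : ∀ u v, IsLeafV arcs u → IsLeafV arcs v → lab u = lab v → u = v
  bicomp_out : ∀ S, BiconnComp arcs S → S.ncard ≠ 2 → 3 ≤ (outArcs arcs S).ncard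

/-- The set of leaf labels of a network. -/
def leafSet (N : PhyloNetwork V L) : Set L := {x | ∃ v, IsLeafV N.arcs v ∧ N.lab v = x}

/-- A directed path, as a nonempty list of distinct vertices consecutively joined by arcs. -/
def IsPath (A : Set (V × V)) (l : List V) : Prop :=
  l ≠ [] ∧ l.Nodup ∧ l.Chain' fun a b => (a, b) ∈ A

/-- A directed path from `u` to `v`. -/
def IsPathFromTo (A : Set (V × V)) (l : List V) (u v : V) : Prop :=
  IsPath A l ∧ l.head? = some u ∧ l.getLast? = some v

/-- `w` is an endpoint of the path `l`. -/
def IsEndpoint (l : List V) (w : V) : Prop := l.head? = some w ∨ l.getLast? = some w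

/-- Two paths are internally vertex-disjoint: any common vertex is an endpoint of both. -/
def IntDisjoint (p q : List V) : Prop :=
  ∀ w, w ∈ p → w ∈ q → IsEndpoint p w ∧ IsEndpoint q w

/-- An embedding of the triplet `xy|z` with summit `p` and cherry vertex `q`:
pairwise internally vertex-disjoint directed paths `q→x`, `q→y`, `p→q`, `p→z`. -/
def HasEmbedding (A : Set (V × V)) (p q x y z : V) : Prop :=
  p ≠ q ∧ ∃ Pqx Pqy Ppq Ppz : List V,
    IsPathFromTo A Pqx q x ∧ IsPathFromTo A Pqy q y ∧
    IsPathFromTo A Ppq p q ∧ IsPathFromTo A Ppz p z ∧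
    IntDisjoint Pqx Pqy ∧ IntDisjoint Pqx Ppq ∧ IntDisjoint Pqx Ppz ∧
    IntDisjoint Pqy Ppq ∧ IntDisjoint Pqy Ppz ∧ IntDisjoint Ppq Ppz

/-- The triplet `xy|z` (on leaf labels) is consistent with the network `N`. -/
def ConsistentT (N : PhyloNetwork V L) (x y z : L) : Prop :=
  ∃ a b c : V, IsLeafV N.arcs a ∧ IsLeafV N.arcs b ∧ IsLeafV N.arcs c ∧
    N.lab a = x ∧ N.lab b = y ∧ N.lab c = z ∧ a ≠ b ∧ a ≠ c ∧ b ≠ c ∧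
    ∃ p q, HasEmbedding N.arcs p q a b c

/-- `T(N)`: the set of all triplets consistent with `N`
(the triple `(x,y,z)` codes the triplet `xy|z`). -/
def TN (N : PhyloNetwork V L) : Set (L × L × L) := {t | ConsistentT N t.1 t.2.1 t.2.2}

/-- `N` is consistent with every triplet in `T`. -/
def ConsistentSet (N : PhyloNetwork V L) (T : Set (L × L × L)) : Prop :=
  ∀ t ∈ T, ConsistentT N t.1 t.2.1 t.2.2

/-- `N` reflects `T` if `T(N) = T`. -/
def Reflects (N : PhyloNetwork V L) (T : Set (L × L × L)) : Prop := TN N = T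

/-- `L(T)`: the set of leaves occurring in a triplet set. -/
def tripletLeaves (T : Set (L × L × L)) : Set L :=
  {x | ∃ t ∈ T, x = t.1 ∨ x = t.2.1 ∨ x = t.2.2}

/-- `T` is a well-formed triplet set: in each triplet the three leaves are distinct, and
the coding is invariant under swapping the first two coordinates (`xy|z = yx|z`). -/
def IsTripletSet (T : Set (L × L × L)) : Prop :=
  ∀ t ∈ T, (t.2.1, t.1, t.2.2) ∈ T ∧ t.1 ≠ t.2.1 ∧ t.1 ≠ t.2.2 ∧ t.2.1 ≠ t.2.2

/-- `T` is dense: for any three distinct leaves at least one triplet on them is present. -/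
def DenseT (T : Set (L × L × L)) : Prop :=
  ∀ x ∈ tripletLeaves T, ∀ y ∈ tripletLeaves T, ∀ z ∈ tripletLeaves T,
    x ≠ y → x ≠ z → y ≠ z → (x, y, z) ∈ T ∨ (x, z, y) ∈ T ∨ (y, z, x) ∈ T

/-- `S` is an SN-set of `T` with respect to the leaf set `U`: `S ⊆ U` and there is
no triplet `xy|z ∈ T` with `x, z ∈ S` and `y ∉ S`. -/
def SNSetOn (T : Set (L × L × L)) (U S : Set L) : Prop :=
  S ⊆ U ∧ ¬ ∃ x y z, (x, y, z) ∈ T ∧ x ∈ S ∧ z ∈ S ∧ y ∉ S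

/-- `S` is an SN-set of `T`. -/
def SNSet (T : Set (L × L × L)) (S : Set L) : Prop := SNSetOn T (tripletLeaves T) S

/-- `S` is a maximal SN-set: a nontrivial SN-set not strictly contained
in any nontrivial SN-set. -/
def MaxSNSet (T : Set (L × L × L)) (S : Set L) : Prop :=
  SNSet T S ∧ S ≠ tripletLeaves T ∧
    ∀ S', SNSet T S' → S' ≠ tripletLeaves T → S ⊆ S' → S' = S

/-- `S` is an SN-set maximal under the restriction of not containing `B`. -/
def MaxSNAvoid (T : Set (L × L × L)) (B S : Set L) : Prop :=
  SNSet T S ∧ ¬ B ⊆ S ∧ ∀ S', SNSet T S' → ¬ B ⊆ S' → S ⊆ S' → S' = S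

/-- `T|S`: the triplets of `T` all of whose leaves lie in `S`. -/
def restrictT (T : Set (L × L × L)) (S : Set L) : Set (L × L × L) :=
  {t ∈ T | t.1 ∈ S ∧ t.2.1 ∈ S ∧ t.2.2 ∈ S}

/-- A cut-arc: an arc whose removal disconnects the underlying undirected graph. -/
def CutArc (A : Set (V × V)) (a : V × V) : Prop :=
  a ∈ A ∧ ¬ ConnectedGraph (A \ {a})

/-- A simple network: it contains a reticulation vertex and all its cut-arcs are
trivial (i.e. end in a leaf). -/
def SimpleNet (N : PhyloNetwork V L) : Prop :=
  (∃ v, IsRetic N.arcs v) ∧ ∀ a, CutArc N.arcs a → IsLeafV N.arcs a.2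

/-- A level-`k` network: every biconnected component contains at most `k`
reticulation vertices. -/
def IsLevel (N : PhyloNetwork V L) (k : ℕ) : Prop :=
  ∀ S, BiconnComp N.arcs S → {v ∈ S | IsRetic N.arcs v}.ncard ≤ k

/-- The total number of reticulation vertices of a network. -/
noncomputable def numRetic (N : PhyloNetwork V L) : ℕ := {v | IsRetic N.arcs v}.ncard

/-- The level of a network: the smallest `k` such that it is a level-`k` network. -/
noncomputable def netLevel (N : PhyloNetwork V L) : ℕ := sInf {k | IsLevel N k}

/-- A highest cut-arc: a cut-arc not reachable from any other cut-arc. -/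
def HighestCutArc (A : Set (V × V)) (a : V × V) : Prop :=
  CutArc A a ∧ ∀ b, CutArc A b → b ≠ a → ¬ Reaches A b.2 a.1

/-- The set of leaf labels below a vertex `v`. -/
def leavesBelowV (N : PhyloNetwork V L) (v : V) : Set L :=
  {x | ∃ w, IsLeafV N.arcs w ∧ Reaches N.arcs v w ∧ N.lab w = x}

/-- An (undirected) cycle in the underlying undirected graph, as a list of at least
three distinct vertices that are consecutively adjacent, the last being adjacent
to the first. -/
def IsUCycle (A : Set (V × V)) (l : List V) : Prop :=
  3 ≤ l.length ∧ l.Nodup ∧ l.Chain' (UAdj A) ∧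
    ∃ u w, l.head? = some u ∧ l.getLast? = some w ∧ UAdj A w u

/-- A highest reticulation: a reticulation lying on a cycle through the root. -/
def HighestRetic (N : PhyloNetwork V L) (r : V) : Prop :=
  IsRetic N.arcs r ∧
    ∃ c, IsUCycle N.arcs c ∧ r ∈ c ∧ ∃ rt, IsRoot N.arcs rt ∧ rt ∈ c

/-- `BHR(N)`: the set of leaves below a highest reticulation. -/
def BHR (N : PhyloNetwork V L) : Set L :=
  {x | ∃ r, HighestRetic N r ∧ x ∈ leavesBelowV N r}

/-- The collection of sets of leaves below the highest cut-arcs of `N`. -/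
def highCutArcLeafSets (N : PhyloNetwork V L) : Set (Set L) :=
  {S | ∃ a, HighestCutArc N.arcs a ∧ S = leavesBelowV N a.2}

/-- `CutInduce(N,T)`: the induced triplet set on the sets of leaves below the
highest cut-arcs of `N`. -/
def CutInduce (N : PhyloNetwork V L) (T : Set (L × L × L)) :
    Set (Set L × Set L × Set L) :=
  {t | t.1 ∈ highCutArcLeafSets N ∧ t.2.1 ∈ highCutArcLeafSets N ∧
       t.2.2 ∈ highCutArcLeafSets N ∧
       t.1 ≠ t.2.1 ∧ t.1 ≠ t.2.2 ∧ t.2.1 ≠ t.2.2 ∧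
       ∃ x ∈ t.1, ∃ y ∈ t.2.1, ∃ z ∈ t.2.2, (x, y, z) ∈ T}

/-- `T ∇ C`: the triplet set induced by a collection `C` of leaf sets. -/
def TInduced (T : Set (L × L × L)) (C : Set (Set L)) : Set (Set L × Set L × Set L) :=
  {t | t.1 ∈ C ∧ t.2.1 ∈ C ∧ t.2.2 ∈ C ∧
       t.1 ≠ t.2.1 ∧ t.1 ≠ t.2.2 ∧ t.2.1 ≠ t.2.2 ∧
       ∃ x ∈ t.1, ∃ y ∈ t.2.1, ∃ z ∈ t.2.2, (x, y, z) ∈ T}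

/-- A label-preserving isomorphism of networks. -/
def NetIso {V₁ V₂ L : Type} (N₁ : PhyloNetwork V₁ L) (N₂ : PhyloNetwork V₂ L) : Prop :=
  ∃ e : V₁ ≃ V₂, (∀ u v : V₁, (u, v) ∈ N₁.arcs ↔ (e u, e v) ∈ N₂.arcs) ∧
    ∀ v, IsLeafV N₁.arcs v → N₂.lab (e v) = N₁.lab v

/-- A (rooted, binary) phylogenetic tree given by its arc set: acyclic, a unique
vertex of indegree 0, every vertex of indegree at most 1 and outdegree 0 or 2.
(The single-vertex tree is allowed.) -/
def IsTreeArcs (A : Set (V × V)) : Prop :=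
  Acyclic A ∧ (∃! r, indeg A r = 0) ∧ (∀ v, indeg A v ≤ 1) ∧
    ∀ v, outdeg A v = 0 ∨ outdeg A v = 2

/-- The leaf labels of a tree (leaves are the vertices of outdegree 0). -/
def treeLeafSet (A : Set (V × V)) (lab : V → L) : Set L :=
  {x | ∃ v, outdeg A v = 0 ∧ lab v = x}

/-- The triplet `xy|z` is consistent with the tree given by `A` and labelling `lab`. -/
def TreeConsistentTriplet (A : Set (V × V)) (lab : V → L) (x y z : L) : Prop :=
  ∃ a b c : V, outdeg A a = 0 ∧ outdeg A b = 0 ∧ outdeg A c = 0 ∧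
    lab a = x ∧ lab b = y ∧ lab c = z ∧ a ≠ b ∧ a ≠ c ∧ b ≠ c ∧
    ∃ p q, HasEmbedding A p q a b c

/-- A CandidateTBR SN-set: an SN-set `S` of `T` such that `T|S` is consistent with
some phylogenetic tree on the leaf set `S`. -/
def CandidateTBR (T : Set (L × L × L)) (S : Set L) : Prop :=
  SNSet T S ∧ ∃ (V : Type) (_ : Finite V) (A : Set (V × V)) (lab : V → L),
    IsTreeArcs A ∧
    (∀ u v, outdeg A u = 0 → outdeg A v = 0 → lab u = lab v → u = v) ∧
    treeLeafSet A lab = S ∧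
    ∀ t ∈ restrictT T S, TreeConsistentTriplet A lab t.1 t.2.1 t.2.2

/-- `S'` is an SN-set of `T|S` (with leaf set `S`) that is maximal under the
restriction of being a nontrivial (proper) subset of `S`. -/
def MaxProperSN (T : Set (L × L × L)) (S S' : Set L) : Prop :=
  SNSetOn (restrictT T S) S S' ∧ S' ≠ S ∧
    ∀ S'', SNSetOn (restrictT T S) S S'' → S'' ≠ S → S' ⊆ S'' → S'' = S'

variable {V : Type}

/-- A simple path from `u` to `v` with vertex set `S`, for a generic relation `r`. -/
inductive SP (r : V → V → Prop) : V → V → Set V → Prop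
  | refl (v : V) : SP r v v {v}
  | cons {u w v : V} {S : Set V} (h : r u w) (hp : SP r w v S) (hu : u ∉ S) :
      SP r u v (insert u S)

namespace SP

variable {r : V → V → Prop} {u v t w : V} {S : Set V}

lemma head_mem (h : SP r u v S) : u ∈ S := by
  cases h with
  | refl => exact rfl
  | cons h hp hu => exact Set.mem_insert _ _

lemma last_mem (h : SP r u v S) : v ∈ S := by
  induction h with
  | refl => exact rfl
  | cons h hp hu ih => exact Set.mem_insert_of_mem _ ih

lemma mem_rtg (h : SP r u v S) :
    ∀ x ∈ S, Relation.ReflTransGen r u x ∧ Relation.ReflTransGen r x v := by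
  induction h with
  | refl v => rintro x rfl; exact ⟨.refl, .refl⟩
  | @cons u w v S h hp hu ih =>
    rintro x hx
    rcases hx with rfl | hx
    · exact ⟨.refl, .head h (ih w hp.head_mem).2⟩
    · exact ⟨.head h (ih x hx).1, (ih x hx).2⟩

lemma to_rtg (h : SP r u v S) : Relation.ReflTransGen r u v :=
  (h.mem_rtg v h.last_mem).1

lemma drop (h : SP r u v S) : ∀ t ∈ S, ∃ S', S' ⊆ S ∧ SP r t v S' := by
  induction h with
  | refl v =>
    rintro t rfl
    exact ⟨{t}, Set.Subset.refl _, .refl t⟩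
  | cons h hp hu ih =>
    rintro t ht
    rcases ht with rfl | ht
    · exact ⟨_, le_refl _, .cons h hp hu⟩
    · rcases ih t ht with ⟨S', hsub, hsp⟩
      exact ⟨S', fun x hx => Set.mem_insert_of_mem _ (hsub hx), hsp⟩

lemma pre (h : SP r u v S) : ∀ t ∈ S, ∃ S', S' ⊆ S ∧ SP r u t S' := by
  induction h with
  | refl v =>
    rintro t rfl
    exact ⟨{t}, Set.Subset.refl _, .refl t⟩
  | cons h hp hu ih =>
    rintro t ht
    rcases ht with rfl | ht
    · exact ⟨{t}, Set.singleton_subset_iff.2 (Set.mem_insert _ _), .refl t⟩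
    · rcases ih t ht with ⟨S', hsub, hsp⟩
      refine ⟨insert _ S', Set.insert_subset_insert hsub, .cons h hsp fun hc => hu (hsub hc)⟩

lemma of_rtg (h : Relation.ReflTransGen r u v) : ∃ S, SP r u v S := by
  induction h using Relation.ReflTransGen.head_induction_on with
  | refl => exact ⟨{v}, .refl v⟩
  | @head a c hab hbc ih =>
    rcases ih with ⟨S, hS⟩
    by_cases hu : a ∈ S
    · rcases hS.drop a hu with ⟨S', _, h'⟩; exact ⟨S', h'⟩
    · exact ⟨_, .cons hab hS hu⟩

lemma mono {r' : V → V → Prop} (hrr : ∀ a b, r a b → r' a b) (h : SP r u v S) :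
    SP r' u v S := by
  induction h with
  | refl v => exact .refl v
  | cons h hp hu ih => exact .cons (hrr _ _ h) ih hu

lemma snoc (h : SP r u v S) : ∀ w, r v w → w ∉ S → SP r u w (insert w S) := by
  induction h with
  | refl v =>
    intro w hvw hw
    have hne : v ≠ w := by rintro rfl; exact hw rfl
    have : (insert w {v} : Set V) = insert v {w} := by ext x; simp [or_comm]
    rw [this]
    exact .cons hvw (.refl w) (by simpa using hne)
  | @cons u' w' v S h hp hu ih =>
    intro w hvw hw
    have hwu' : w ≠ u' := by rintro rfl; exact hw (Set.mem_insert _ _)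
    have : (insert w (insert u' S) : Set V) = insert u' (insert w S) := by
      ext x; simp; tauto
    rw [this]
    refine .cons h (ih w hvw fun hc => hw (Set.mem_insert_of_mem _ hc)) ?_
    simp only [Set.mem_insert_iff, not_or]
    exact ⟨fun hc => hwu' hc.symm, hu⟩

lemma rev (hsymm : ∀ a b, r a b → r b a) (h : SP r u v S) : SP r v u S := by
  induction h with
  | refl v => exact .refl v
  | cons h hp hu ih => exact ih.snoc _ (hsymm _ _ h) hu

lemma eq_singleton (h : SP r u u S) : S = {u} := by
  cases h with
  | refl => rfl
  | cons h hp hu => exact absurd hp.last_mem hu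

lemma append (h1 : SP r u v S) :
    ∀ S2 c, SP r v c S2 → S ∩ S2 ⊆ {v} → SP r u c (S ∪ S2) := by
  induction h1 with
  | refl v =>
    intro S2 c h2 hint
    have : ({v} : Set V) ∪ S2 = S2 :=
      Set.union_eq_self_of_subset_left (Set.singleton_subset_iff.2 h2.head_mem)
    rw [this]; exact h2
  | @cons u' w' v S h hp hu ih =>
    intro S2 c h2 hint
    have hu'v : u' ≠ v := by rintro rfl; exact hu hp.last_mem
    have hu2 : u' ∉ S2 := fun hc => hu'v (hint ⟨Set.mem_insert _ _, hc⟩)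
    rw [Set.insert_union]
    refine .cons h (ih S2 c h2 fun x hx => hint ⟨Set.mem_insert_of_mem _ hx.1, hx.2⟩) ?_
    simp only [Set.mem_union, not_or]
    exact ⟨hu, hu2⟩

end SP

section Chains

variable {V : Type} {A : Set (V × V)}

/-- Undirected chains within a set `T`. -/
def CW (A : Set (V × V)) (T : Set V) (x y : V) : Prop :=
  Relation.ReflTransGen (fun a b => a ∈ T ∧ b ∈ T ∧ UAdj A a b) x y

lemma UAdj.symm' {u v : V} (h : UAdj A u v) : UAdj A v u := h.elim .inr .inl

lemma CW.mono {T T' : Set V} (hTT : T ⊆ T') {x y : V} (h : CW A T x y) : CW A T' x y :=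
  Relation.ReflTransGen.mono (r := fun a b => a ∈ T ∧ b ∈ T ∧ UAdj A a b)
    (p := fun a b => a ∈ T' ∧ b ∈ T' ∧ UAdj A a b)
    (fun a b hab => ⟨hTT hab.1, hTT hab.2.1, hab.2.2⟩) x y h

lemma CW.symm {T : Set V} {x y : V} (h : CW A T x y) : CW A T y x := by
  refine Relation.ReflTransGen.mono (r := Function.swap fun a b => a ∈ T ∧ b ∈ T ∧ UAdj A a b)
    ?_ _ _ (Relation.reflTransGen_swap.2 h)
  intro a b hab
  exact ⟨hab.2.1, hab.1, hab.2.2.symm'⟩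

lemma CW.trans {T : Set V} {x y z : V} (h : CW A T x y) (h' : CW A T y z) : CW A T x z :=
  Relation.ReflTransGen.trans h h'

lemma CW.mem_of_ne {T : Set V} {x y : V} (h : CW A T x y) (hne : x ≠ y) :
    x ∈ T ∧ y ∈ T := by
  induction h with
  | refl => exact absurd rfl hne
  | @tail b c hxb hbc ih =>
    refine ⟨?_, hbc.2.1⟩
    by_cases hxb' : x = b
    · exact hxb' ▸ hbc.1
    · exact (ih hxb').1

lemma connWithin_iff {S : Set V} : ConnWithin A S ↔ ∀ u ∈ S, ∀ v ∈ S, CW A S u v := Iff.rfl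

lemma Biconnected.connWithin_diff {S : Set V} (h : Biconnected A S) (w : V) :
    ConnWithin A (S \ {w}) := by
  by_cases hw : w ∈ S
  · exact h.2.2 w hw
  · rw [Set.diff_singleton_eq_self hw]
    exact h.2.1

namespace SP

variable {r : V → V → Prop} {u v t w : V} {S : Set V}

lemma cw_last (hr : ∀ a b, r a b → UAdj A a b) (h : SP r u v S) :
    ∀ x ∈ S, CW A S x v := by
  induction h with
  | refl v => rintro x rfl; exact .refl
  | @cons u w v S0 h hp hu ih =>
    rintro x hx
    rcases hx with rfl | hx
    · exact Relation.ReflTransGen.head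
        ⟨Set.mem_insert _ _, Set.mem_insert_of_mem _ hp.head_mem, hr _ _ h⟩
        ((ih w hp.head_mem).mono (Set.subset_insert _ _))
    · exact (ih x hx).mono (Set.subset_insert _ _)

lemma cw_all (hr : ∀ a b, r a b → UAdj A a b) (h : SP r u v S) :
    ∀ x ∈ S, ∀ y ∈ S, CW A S x y := fun x hx y hy =>
  ((h.cw_last hr x hx).trans (h.cw_last hr y hy).symm)

lemma split (hr : ∀ a b, r a b → UAdj A a b) (h : SP r u v S) :
    ∀ w x, x ∈ S → x ≠ w → CW A (S \ {w}) x u ∨ CW A (S \ {w}) x v := by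
  induction h with
  | refl v =>
    rintro w x rfl hxw
    exact Or.inl .refl
  | @cons u' h' v S0 h hp hu ih =>
    intro w x hx hxw
    rcases hx with rfl | hx
    · exact Or.inl .refl
    · by_cases hw : w = u'
      · subst hw
        have hsub : S0 ⊆ insert w S0 \ {w} := fun a ha =>
          ⟨Set.mem_insert_of_mem _ ha, fun hc => hu ((Set.mem_singleton_iff.1 hc) ▸ ha)⟩
        exact Or.inr ((hp.cw_last hr x hx).mono hsub)
      · have hsub : S0 \ {w} ⊆ insert u' S0 \ {w} :=
          Set.diff_subset_diff_left (Set.subset_insert _ _)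
        rcases ih w x hx hxw with hc | hc
        · -- chain to h'
          by_cases hh : h' = w
          · -- impossible: chain within S0 \ {w} ends at w
            by_cases hxh : x = h'
            · exact absurd (hxh.trans hh) hxw
            · exact absurd ((hc.mem_of_ne hxh).2.2) (by simp [hh])
          · refine Or.inl ((hc.mono hsub).tail ?_)
            refine ⟨⟨Set.mem_insert_of_mem _ hp.head_mem, hh⟩,
              ⟨Set.mem_insert _ _, fun hc' => hw (Set.mem_singleton_iff.1 hc').symm⟩,
              (hr _ _ h).symm'⟩
        · exact Or.inr (hc.mono hsub)

end SP

end Chains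
section Bic

variable {V : Type} [Finite V] {A : Set (V × V)}

lemma uadj_id (a b : V) (h : UAdj A a b) : UAdj A a b := h

lemma ConnWithin.cw {S : Set V} (h : ConnWithin A S) {u v : V} (hu : u ∈ S) (hv : v ∈ S) :
    CW A S u v := h u hu v hv

/-- Attaching a simple undirected path with both endpoints in a biconnected set
preserves biconnectivity. -/
lemma ear_biconn {B S : Set V} {u t : V} (hB : Biconnected A B)
    (hS : SP (UAdj A) u t S) (hu : u ∈ B) (ht : t ∈ B) :
    Biconnected A (B ∪ S) := by
  obtain ⟨hB2, hBconn, hBdel⟩ := hB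
  have hBfin : (B ∪ S).Finite := Set.toFinite _
  refine ⟨le_trans hB2 (Set.ncard_le_ncard Set.subset_union_left hBfin), ?_, ?_⟩
  · -- connectivity
    have key : ∀ x ∈ B ∪ S, CW A (B ∪ S) x u := by
      rintro x (hx | hx)
      · exact (hBconn.cw hx hu).mono Set.subset_union_left
      · exact (hS.cw_all uadj_id x hx u hS.head_mem).mono Set.subset_union_right
    intro x hx y hy
    exact (key x hx).trans (key y hy).symm
  · -- deletion of any vertex
    intro w hw
    obtain ⟨τ, hτB, hτw⟩ := Set.exists_ne_of_one_lt_ncard (lt_of_lt_of_le one_lt_two hB2) w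
    have hτ : τ ∈ (B ∪ S) \ {w} := ⟨Or.inl hτB, hτw⟩
    have hBd : ∀ x ∈ B \ {w}, CW A ((B ∪ S) \ {w}) x τ := by
      intro x hx
      exact (((Biconnected.connWithin_diff ⟨hB2, hBconn, hBdel⟩ w).cw hx ⟨hτB, hτw⟩)).mono
        (Set.diff_subset_diff_left Set.subset_union_left)
    have key : ∀ x ∈ (B ∪ S) \ {w}, CW A ((B ∪ S) \ {w}) x τ := by
      rintro x ⟨hx | hx, hxw⟩
      · exact hBd x ⟨hx, hxw⟩
      · rcases hS.split uadj_id w x hx (by simpa using hxw) with hc | hc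
        · -- chain to u within S \ {w}
          by_cases hxu : x = u
          · exact hBd x ⟨hxu ▸ hu, hxw⟩
          · have hmem := hc.mem_of_ne hxu
            refine ((hc.mono (Set.diff_subset_diff_left Set.subset_union_right)).trans
              (hBd u ⟨hu, hmem.2.2⟩))
        · by_cases hxt : x = t
          · exact hBd x ⟨hxt ▸ ht, hxw⟩
          · have hmem := hc.mem_of_ne hxt
            refine ((hc.mono (Set.diff_subset_diff_left Set.subset_union_right)).trans
              (hBd t ⟨ht, hmem.2.2⟩))
    intro x hx y hy
    exact (key x hx).trans (key y hy).symm

/-- Two internally disjoint simple paths with common distinct endpoints form a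
biconnected set (a cycle). -/
lemma twopath_biconn {S S' : Set V} {z y : V} (hP : SP (UAdj A) z y S)
    (hQ : SP (UAdj A) z y S') (hint : S ∩ S' ⊆ {z, y}) (hzy : z ≠ y) :
    Biconnected A (S ∪ S') := by
  have hz : z ∈ S ∪ S' := Or.inl hP.head_mem
  have hy : y ∈ S ∪ S' := Or.inl hP.last_mem
  refine ⟨Set.one_lt_ncard_iff (Set.toFinite _) |>.2 ⟨z, y, hz, hy, hzy⟩, ?_, ?_⟩
  · have key : ∀ x ∈ S ∪ S', CW A (S ∪ S') x y := by
      rintro x (hx | hx)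
      · exact (hP.cw_last uadj_id x hx).mono Set.subset_union_left
      · exact (hQ.cw_last uadj_id x hx).mono Set.subset_union_right
    intro x hx y' hy'
    exact (key x hx).trans (key y' hy').symm
  · intro w hw
    classical
    -- target
    set τ := if w = y then z else y with hτdef
    have hτmem : τ ∈ (S ∪ S') \ {w} := by
      by_cases hwy : w = y
      · simp only [hτdef, if_pos hwy]
        exact ⟨hz, by simp [hwy ▸ hzy]⟩
      · simp only [hτdef, if_neg hwy]
        exact ⟨hy, by simp [Ne.symm hwy]⟩
    -- one of the two paths is free of w, connecting z and y when both differ from w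
    have hfree : w ≠ z → w ≠ y → CW A ((S ∪ S') \ {w}) z y := by
      intro hwz hwy
      have : w ∉ S ∨ w ∉ S' := by
        by_contra hc
        push_neg at hc
        rcases hint ⟨hc.1, hc.2⟩ with h | h
        · exact hwz h
        · exact hwy h
      rcases this with hns | hns
      · have hsub : S ⊆ (S ∪ S') \ {w} := fun a ha =>
          ⟨Or.inl ha, fun hc => hns ((Set.mem_singleton_iff.1 hc) ▸ ha)⟩
        exact (hP.cw_last uadj_id z hP.head_mem).mono hsub
      · have hsub : S' ⊆ (S ∪ S') \ {w} := fun a ha =>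
          ⟨Or.inr ha, fun hc => hns ((Set.mem_singleton_iff.1 hc) ▸ ha)⟩
        exact (hQ.cw_last uadj_id z hQ.head_mem).mono hsub
    -- endpoints reach τ
    have hend : ∀ e, e = z ∨ e = y → e ≠ w → CW A ((S ∪ S') \ {w}) e τ := by
      rintro e he hew
      by_cases hwy : w = y
      · -- τ = z ; e = z (since e ≠ w = y)
        have hez : e = z := by
          rcases he with rfl | rfl
          · rfl
          · exact absurd hwy.symm hew
        simp only [hτdef, if_pos hwy]
        exact hez ▸ Relation.ReflTransGen.refl
      · simp only [hτdef, if_neg hwy]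
        rcases he with rfl | rfl
        · -- e = z : if z = w impossible since e ≠ w
          exact hfree (Ne.symm hew) hwy
        · exact Relation.ReflTransGen.refl
    have keyS : ∀ (T : Set V), SP (UAdj A) z y T → T ⊆ S ∪ S' →
        ∀ x ∈ T, x ≠ w → CW A ((S ∪ S') \ {w}) x τ := by
      intro T hT hTsub x hx hxw
      rcases hT.split uadj_id w x hx hxw with hc | hc
      · by_cases hxz : x = z
        · exact hend x (Or.inl hxz) hxw
        · have hmem := hc.mem_of_ne hxz
          exact (hc.mono (Set.diff_subset_diff_left hTsub)).trans
            (hend z (Or.inl rfl) (by simpa using hmem.2.2))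
      · by_cases hxy : x = y
        · exact hend x (Or.inr hxy) hxw
        · have hmem := hc.mem_of_ne hxy
          exact (hc.mono (Set.diff_subset_diff_left hTsub)).trans
            (hend y (Or.inr rfl) (by simpa using hmem.2.2))
    have key : ∀ x ∈ (S ∪ S') \ {w}, CW A ((S ∪ S') \ {w}) x τ := by
      rintro x ⟨hx | hx, hxw⟩
      · exact keyS S hP Set.subset_union_left x hx (by simpa using hxw)
      · exact keyS S' hQ Set.subset_union_right x hx (by simpa using hxw)
    intro x hx y' hy'
    exact (key x hx).trans (key y' hy').symm

/-- Merging two biconnected sets sharing two vertices. -/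
lemma biconn_union {S T : Set V} {x y : V} (hS : Biconnected A S) (hT : Biconnected A T)
    (hx : x ∈ S ∩ T) (hy : y ∈ S ∩ T) (hxy : x ≠ y) : Biconnected A (S ∪ T) := by
  refine ⟨le_trans hS.1 (Set.ncard_le_ncard Set.subset_union_left (Set.toFinite _)), ?_, ?_⟩
  · have key : ∀ a ∈ S ∪ T, CW A (S ∪ T) a x := by
      rintro a (ha | ha)
      · exact ((hS.2.1).cw ha hx.1).mono Set.subset_union_left
      · exact ((hT.2.1).cw ha hx.2).mono Set.subset_union_right
    intro a ha b hb
    exact (key a ha).trans (key b hb).symm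
  · intro w hw
    obtain ⟨e, he, hew⟩ : ∃ e, e ∈ S ∩ T ∧ e ≠ w := by
      by_cases hxw : x = w
      · exact ⟨y, hy, fun hc => hxy (hxw ▸ hc ▸ rfl)⟩
      · exact ⟨x, hx, hxw⟩
    have key : ∀ a ∈ (S ∪ T) \ {w}, CW A ((S ∪ T) \ {w}) a e := by
      rintro a ⟨ha | ha, haw⟩
      · exact ((hS.connWithin_diff w).cw ⟨ha, haw⟩ ⟨he.1, by simpa using hew⟩).mono
          (Set.diff_subset_diff_left Set.subset_union_left)
      · exact ((hT.connWithin_diff w).cw ⟨ha, haw⟩ ⟨he.2, by simpa using hew⟩).mono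
          (Set.diff_subset_diff_left Set.subset_union_right)
    intro a ha b hb
    exact (key a ha).trans (key b hb).symm

/-- Every biconnected set extends to a biconnected component. -/
lemma exists_biconnComp {S : Set V} (hS : Biconnected A S) :
    ∃ B, BiconnComp A B ∧ S ⊆ B := by
  have hfin : {T : Set V | Biconnected A T ∧ S ⊆ T}.Finite := Set.toFinite _
  have hne : {T : Set V | Biconnected A T ∧ S ⊆ T}.Nonempty := ⟨S, hS, le_refl S⟩
  obtain ⟨B, hB, hmax⟩ : ∃ B ∈ {T : Set V | Biconnected A T ∧ S ⊆ T},
      ∀ a' ∈ {T : Set V | Biconnected A T ∧ S ⊆ T}, B ⊆ a' → B = a' := by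
    obtain ⟨B, hB, h⟩ := Set.Finite.exists_maximalFor id _ hfin hne
    exact ⟨B, hB, fun a' ha h' => le_antisymm h' (h ha h')⟩
  refine ⟨B, ⟨hB.1, ?_⟩, hB.2⟩
  intro S' hS' hsub
  exact (hmax S' ⟨hS', le_trans hB.2 hsub⟩ hsub).symm

lemma BiconnComp.eq_of_shared_pair {B1 B2 : Set V} (h1 : BiconnComp A B1)
    (h2 : BiconnComp A B2) {x y : V} (hx : x ∈ B1 ∩ B2) (hy : y ∈ B1 ∩ B2)
    (hxy : x ≠ y) : B1 = B2 := by
  have hu := biconn_union h1.1 h2.1 hx hy hxy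
  have e1 : B1 ∪ B2 = B1 := h1.2 _ hu Set.subset_union_left
  have e2 : B1 ∪ B2 = B2 := h2.2 _ hu Set.subset_union_right
  rw [← e1, e2]

end Bic
section NetBasics

variable {V L : Type}

lemma no_self_loop {A : Set (V × V)} (hA : Acyclic A) (v : V) : (v, v) ∉ A :=
  fun h => hA v v h Relation.ReflTransGen.refl

lemma reaches_antisymm {A : Set (V × V)} (hA : Acyclic A) {u v : V}
    (h1 : Reaches A u v) (h2 : Reaches A v u) : u = v := by
  rcases Relation.ReflTransGen.cases_head h1 with rfl | ⟨a, hua, hav⟩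
  · rfl
  · exact absurd (Relation.ReflTransGen.trans hav h2) (hA u a hua)

lemma outdeg_zero_iff {A : Set (V × V)} [Finite V] {v : V} :
    outdeg A v = 0 ↔ ∀ w, (v, w) ∉ A := by
  rw [outdeg, Set.ncard_eq_zero (Set.toFinite _)]
  simp [Set.eq_empty_iff_forall_notMem]

lemma indeg_zero_iff {A : Set (V × V)} [Finite V] {v : V} :
    indeg A v = 0 ↔ ∀ u, (u, v) ∉ A := by
  rw [indeg, Set.ncard_eq_zero (Set.toFinite _)]
  simp [Set.eq_empty_iff_forall_notMem]

variable (N : PhyloNetwork V L)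

lemma leaf_of_outdeg_zero {v : V} (h : outdeg N.arcs v = 0) : IsLeafV N.arcs v := by
  rcases N.vertex_type v with hv | hv | hv | hv
  · rw [hv.2] at h; exact absurd h two_ne_zero
  · rw [hv.2] at h; exact absurd h two_ne_zero
  · rw [hv.2] at h; exact absurd h one_ne_zero
  · exact hv

lemma root_of_indeg_zero {v : V} (h : indeg N.arcs v = 0) : IsRoot N.arcs v := by
  rcases N.vertex_type v with hv | hv | hv | hv
  · exact hv
  · rw [hv.1] at h; exact absurd h one_ne_zero
  · rw [hv.1] at h; exact absurd h two_ne_zero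
  · rw [hv.1] at h; exact absurd h one_ne_zero

lemma exists_leaf_below (v : V) : ∃ w, IsLeafV N.arcs w ∧ Reaches N.arcs v w := by
  haveI := N.vfin
  set A := N.arcs with hA
  have H : ∀ m, ∀ v : V, {w | Reaches A v w}.ncard ≤ m →
      ∃ w, IsLeafV A w ∧ Reaches A v w := by
    intro m
    induction m with
    | zero =>
      intro v hv
      have h0 : {w | Reaches A v w} = ∅ :=
        Set.ncard_eq_zero (Set.toFinite _) |>.1 (Nat.le_zero.1 hv)
      have hvv : v ∈ {w | Reaches A v w} := Relation.ReflTransGen.refl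
      rw [h0] at hvv
      exact absurd hvv (Set.notMem_empty v)
    | succ m ih =>
      intro v hv
      by_cases hz : outdeg A v = 0
      · exact ⟨v, leaf_of_outdeg_zero N hz, Relation.ReflTransGen.refl⟩
      · obtain ⟨c, hc⟩ := Set.nonempty_of_ncard_ne_zero hz
        have hvc : Reaches A v c := Relation.ReflTransGen.single hc
        have hcv : c ≠ v := fun h => no_self_loop N.acyclic v (h ▸ hc)
        have hsub : {w | Reaches A c w} ⊆ {w | Reaches A v w} :=
          fun w hw => Relation.ReflTransGen.trans hvc hw
        have hvmem : v ∉ {w | Reaches A c w} :=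
          fun h => hcv (reaches_antisymm N.acyclic h hvc)
        have hlt : {w | Reaches A c w}.ncard < {w | Reaches A v w}.ncard :=
          Set.ncard_lt_ncard ((Set.ssubset_iff_of_subset hsub).2
            ⟨v, Relation.ReflTransGen.refl, hvmem⟩) (Set.toFinite _)
        obtain ⟨w, hw, hcw⟩ := ih c (by omega)
        exact ⟨w, hw, Relation.ReflTransGen.trans hvc hcw⟩
  exact H _ v le_rfl

lemma root_reaches_all {rt : V} (hrt : IsRoot N.arcs rt) (v : V) : Reaches N.arcs rt v := by
  haveI := N.vfin
  set A := N.arcs with hA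
  have H : ∀ m, ∀ v : V, {u | Reaches A u v}.ncard ≤ m → Reaches A rt v := by
    intro m
    induction m with
    | zero =>
      intro v hv
      have h0 : {u | Reaches A u v} = ∅ :=
        Set.ncard_eq_zero (Set.toFinite _) |>.1 (Nat.le_zero.1 hv)
      have hvv : v ∈ {u | Reaches A u v} := Relation.ReflTransGen.refl
      rw [h0] at hvv
      exact absurd hvv (Set.notMem_empty v)
    | succ m ih =>
      intro v hv
      by_cases hz : indeg A v = 0
      · have : v = rt := N.root_unique v rt (root_of_indeg_zero N hz) hrt
        exact this ▸ Relation.ReflTransGen.refl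
      · obtain ⟨u, hu⟩ := Set.nonempty_of_ncard_ne_zero hz
        have huv : Reaches A u v := Relation.ReflTransGen.single hu
        have hsub : {x | Reaches A x u} ⊆ {x | Reaches A x v} :=
          fun x hx => Relation.ReflTransGen.trans hx huv
        have hvmem : v ∉ {x | Reaches A x u} := fun h => N.acyclic u v hu h
        have hlt : {x | Reaches A x u}.ncard < {x | Reaches A x v}.ncard :=
          Set.ncard_lt_ncard ((Set.ssubset_iff_of_subset hsub).2
            ⟨v, Relation.ReflTransGen.refl, hvmem⟩) (Set.toFinite _)
        exact Relation.ReflTransGen.trans (ih u (by omega)) huv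
  exact H _ v le_rfl

lemma indeg_le_two (v : V) : indeg N.arcs v ≤ 2 := by
  rcases N.vertex_type v with hv | hv | hv | hv
  all_goals rw [hv.1]
  all_goals omega

lemma outdeg_le_two (v : V) : outdeg N.arcs v ≤ 2 := by
  rcases N.vertex_type v with hv | hv | hv | hv
  all_goals rw [hv.2]
  all_goals omega

lemma degsum_le_three (v : V) : indeg N.arcs v + outdeg N.arcs v ≤ 3 := by
  rcases N.vertex_type v with hv | hv | hv | hv
  all_goals rw [hv.1, hv.2]
  all_goals omega

lemma nbrs_ncard_le_three (v : V) : {w | UAdj N.arcs v w}.ncard ≤ 3 := by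
  haveI := N.vfin
  have hsub : {w | UAdj N.arcs v w} ⊆ {w | (v, w) ∈ N.arcs} ∪ {w | (w, v) ∈ N.arcs} := by
    intro w hw
    exact hw.elim Or.inl Or.inr
  calc {w | UAdj N.arcs v w}.ncard
      ≤ ({w | (v, w) ∈ N.arcs} ∪ {w | (w, v) ∈ N.arcs}).ncard :=
        Set.ncard_le_ncard hsub (Set.toFinite _)
    _ ≤ {w | (v, w) ∈ N.arcs}.ncard + {w | (w, v) ∈ N.arcs}.ncard :=
        Set.ncard_union_le _ _
    _ ≤ 3 := by
        have h := degsum_le_three N v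
        rw [indeg, outdeg] at h
        omega

end NetBasics
section Blocks

variable {V : Type} [Finite V] {A : Set (V × V)}

lemma two_nbrs_in {S : Set V} {v : V} (hv : v ∈ S) (hS : Biconnected A S)
    (h3 : 3 ≤ S.ncard) (hns : ¬ UAdj A v v) :
    ∃ w1 w2, w1 ≠ w2 ∧ w1 ∈ S ∧ w2 ∈ S ∧ w1 ≠ v ∧ w2 ≠ v ∧
      UAdj A v w1 ∧ UAdj A v w2 := by
  obtain ⟨z, hz, hzv⟩ := Set.exists_ne_of_one_lt_ncard (show 1 < S.ncard by omega) v
  obtain ⟨w1, hrel1, -⟩ := Relation.ReflTransGen.cases_head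
    (hS.2.1 v hv z hz) |>.resolve_left (fun h => hzv h.symm)
  have hw1v : w1 ≠ v := fun h => hns (h ▸ hrel1.2.2)
  have hw1S : w1 ∈ S := hrel1.2.1
  have hcard : 2 ≤ (S \ {w1}).ncard := by
    rw [Set.ncard_diff_singleton_of_mem hw1S]
    omega
  obtain ⟨z', hz', hz'v⟩ := Set.exists_ne_of_one_lt_ncard (show 1 < (S \ {w1}).ncard by omega) v
  have hvS' : v ∈ S \ {w1} := ⟨hv, by simpa using hw1v.symm⟩
  obtain ⟨w2, hrel2, -⟩ := Relation.ReflTransGen.cases_head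
    (hS.2.2 w1 hw1S v hvS' z' hz') |>.resolve_left (fun h => hz'v h.symm)
  have hw2v : w2 ≠ v := fun h => hns (h ▸ hrel2.2.2)
  refine ⟨w1, w2, ?_, hw1S, hrel2.2.1.1, hw1v, hw2v, hrel1.2.2, hrel2.2.2⟩
  intro h
  exact hrel2.2.1.2 (by simp [← h])

lemma three_le_ncard {S : Set V} {a b c : V} (ha : a ∈ S) (hb : b ∈ S) (hc : c ∈ S)
    (hab : a ≠ b) (hac : a ≠ c) (hbc : b ≠ c) : 3 ≤ S.ncard := by
  have hsub : ({a, b, c} : Set V) ⊆ S := by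
    intro x hx
    rcases hx with rfl | rfl | rfl <;> assumption
  have h3 : ({a, b, c} : Set V).ncard = 3 := by
    rw [Set.ncard_insert_of_notMem (by simp [hab, hac]),
      Set.ncard_insert_of_notMem (by simp [hbc]), Set.ncard_singleton]
  calc (3 : ℕ) = ({a, b, c} : Set V).ncard := h3.symm
    _ ≤ S.ncard := Set.ncard_le_ncard hsub (Set.toFinite _)

lemma four_le_ncard {S : Set V} {a b c d : V} (ha : a ∈ S) (hb : b ∈ S) (hc : c ∈ S)
    (hd : d ∈ S) (hab : a ≠ b) (hac : a ≠ c) (had : a ≠ d) (hbc : b ≠ c) (hbd : b ≠ d)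
    (hcd : c ≠ d) : 4 ≤ S.ncard := by
  have hsub : ({a, b, c, d} : Set V) ⊆ S := by
    intro x hx
    rcases hx with rfl | rfl | rfl | rfl <;> assumption
  have h4 : ({a, b, c, d} : Set V).ncard = 4 := by
    rw [Set.ncard_insert_of_notMem (by simp [hab, hac, had]),
      Set.ncard_insert_of_notMem (by simp [hbc, hbd]),
      Set.ncard_insert_of_notMem (by simp [hcd]), Set.ncard_singleton]
  calc (4 : ℕ) = ({a, b, c, d} : Set V).ncard := h4.symm
    _ ≤ S.ncard := Set.ncard_le_ncard hsub (Set.toFinite _)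

/-- A maximal biconnected set absorbs any undirected simple path between two
of its vertices. -/
lemma BiconnComp.absorb_path {B S : Set V} {u t : V} (hB : BiconnComp A B)
    (hS : SP (UAdj A) u t S) (hu : u ∈ B) (ht : t ∈ B) : S ⊆ B := by
  have hbc := ear_biconn hB.1 hS hu ht
  have heq := hB.2 _ hbc Set.subset_union_left
  rw [← heq]
  exact Set.subset_union_right

lemma BiconnComp.absorb_vertex {B : Set V} {x w1 w2 : V} (hB : BiconnComp A B)
    (hw : w1 ≠ w2) (h1 : w1 ∈ B) (h2 : w2 ∈ B) (hx1 : UAdj A x w1) (hx2 : UAdj A x w2)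
    (hxw1 : x ≠ w1) (hxw2 : x ≠ w2) : x ∈ B := by
  have hpath : SP (UAdj A) w1 w2 (insert w1 (insert x {w2})) := by
    refine .cons hx1.symm' (.cons hx2 (.refl w2) (by simpa using hxw2)) ?_
    simp only [Set.mem_insert_iff, Set.mem_singleton_iff, not_or]
    exact ⟨fun h => hxw1 h.symm, hw⟩
  have := hB.absorb_path hpath h1 h2
  exact this (by simp)

end Blocks

section NetBlocks

variable {V L : Type} (N : PhyloNetwork V L)

/-- The nontrivial biconnected components of the network. -/
def NTB : Set (Set V) := {B | BiconnComp N.arcs B ∧ 3 ≤ B.ncard}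

lemma not_uadj_self (v : V) : ¬ UAdj N.arcs v v := by
  rintro (h | h) <;> exact no_self_loop N.acyclic v h

lemma leaf_not_in_ntb {v : V} (hv : IsLeafV N.arcs v) {B : Set V} (hB : B ∈ NTB N) :
    v ∉ B := by
  haveI := N.vfin
  intro hmem
  obtain ⟨w1, w2, hw, -, -, -, -, h1, h2⟩ :=
    two_nbrs_in hmem hB.1.1 hB.2 (not_uadj_self N v)
  have hsub : {w | UAdj N.arcs v w} ⊆ {w | (v, w) ∈ N.arcs} ∪ {w | (w, v) ∈ N.arcs} :=
    fun w hw => hw.elim Or.inl Or.inr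
  have hle : {w | UAdj N.arcs v w}.ncard ≤ 1 := by
    calc {w | UAdj N.arcs v w}.ncard
        ≤ ({w | (v, w) ∈ N.arcs} ∪ {w | (w, v) ∈ N.arcs}).ncard :=
          Set.ncard_le_ncard hsub (Set.toFinite _)
      _ ≤ {w | (v, w) ∈ N.arcs}.ncard + {w | (w, v) ∈ N.arcs}.ncard :=
          Set.ncard_union_le _ _
      _ ≤ 1 := by
          have h1 := hv.1; have h2 := hv.2
          rw [indeg] at h1; rw [outdeg] at h2
          omega
  have : 2 ≤ {w | UAdj N.arcs v w}.ncard :=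
    Set.one_lt_ncard_iff (Set.toFinite _) |>.2 ⟨w1, w2, h1, h2, hw⟩
  omega

lemma ntb_disjoint {B1 B2 : Set V} (h1 : B1 ∈ NTB N) (h2 : B2 ∈ NTB N)
    (hne : B1 ≠ B2) : B1 ∩ B2 = ∅ := by
  haveI := N.vfin
  by_contra hc
  obtain ⟨u, hu⟩ := Set.nonempty_iff_ne_empty.2 hc
  have hshared : ∀ x, x ∈ B1 ∩ B2 → x = u := by
    intro x hx
    by_contra hxu
    exact hne (BiconnComp.eq_of_shared_pair h1.1 h2.1 hx hu hxu)
  obtain ⟨w1, w2, hw12, hw1B, hw2B, hw1u, hw2u, ha1, ha2⟩ :=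
    two_nbrs_in hu.1 h1.1.1 h1.2 (not_uadj_self N u)
  obtain ⟨w3, w4, hw34, hw3B, hw4B, hw3u, hw4u, ha3, ha4⟩ :=
    two_nbrs_in hu.2 h2.1.1 h2.2 (not_uadj_self N u)
  have hcross : ∀ x y, x ∈ B1 → x ≠ u → y ∈ B2 → y ≠ u → x ≠ y := by
    rintro x y hx hxu hy hyu rfl
    exact hxu (hshared x ⟨hx, hy⟩)
  have h4 : 4 ≤ {w | UAdj N.arcs u w}.ncard :=
    four_le_ncard ha1 ha2 ha3 ha4 hw12
      (hcross w1 w3 hw1B hw1u hw3B hw3u) (hcross w1 w4 hw1B hw1u hw4B hw4u)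
      (hcross w2 w3 hw2B hw2u hw3B hw3u) (hcross w2 w4 hw2B hw2u hw4B hw4u) hw34
  have h3 := nbrs_ncard_le_three N u
  omega

end NetBlocks
section Merge

variable {V : Type} [Finite V] {A : Set (V × V)}

lemma SP.drop_ne_head {r : V → V → Prop} {u v t : V} {S : Set V} (h : SP r u v S)
    (ht : t ∈ S) (htu : t ≠ u) : ∃ S', S' ⊆ S ∧ u ∉ S' ∧ SP r t v S' := by
  cases h with
  | refl => exact absurd ht (by simpa using htu)
  | @cons u w v S0 harc hp hu =>
    rcases ht with rfl | ht
    · exact absurd rfl htu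
    · obtain ⟨S', hsub, hsp⟩ := hp.drop t ht
      exact ⟨S', fun x hx => Set.mem_insert_of_mem _ (hsub hx),
        fun hc => hu (hsub hc), hsp⟩

lemma merge_block {r : V → V → Prop} (hsub : ∀ a b, r a b → UAdj A a b)
    (hirr : ∀ a, ¬ r a a)
    (hanti : ∀ a b, Relation.ReflTransGen r a b → Relation.ReflTransGen r b a → a = b)
    {z a1 a2 y : V} (hr1 : Relation.ReflTransGen r z a1)
    (hr2 : Relation.ReflTransGen r z a2)
    (ha : a1 ≠ a2) (hy1 : r a1 y) (hy2 : r a2 y) :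
    ∃ B, BiconnComp A B ∧ y ∈ B ∧ 3 ≤ B.ncard := by
  classical
  set 𝒞 : Set (V × Set V × Set V) :=
    {p | SP r p.1 a1 p.2.1 ∧ SP r p.1 a2 p.2.2} with h𝒞
  have hne : 𝒞.Nonempty := by
    obtain ⟨S1, h1⟩ := SP.of_rtg hr1
    obtain ⟨S2, h2⟩ := SP.of_rtg hr2
    exact ⟨(z, S1, S2), h1, h2⟩
  obtain ⟨p, hp, hmin⟩ : ∃ p ∈ 𝒞, ∀ a' ∈ 𝒞, (a'.2.1 ∪ a'.2.2).ncard ≤ (p.2.1 ∪ p.2.2).ncard →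
      (p.2.1 ∪ p.2.2).ncard = (a'.2.1 ∪ a'.2.2).ncard := by
    obtain ⟨p, hp, h⟩ := Set.Finite.exists_minimalFor
      (fun p : V × Set V × Set V => (p.2.1 ∪ p.2.2).ncard) _ (Set.toFinite 𝒞) hne
    exact ⟨p, hp, fun a' ha h' => le_antisymm (h ha h') h'⟩
  obtain ⟨z', S1, S2⟩ := p
  obtain ⟨h1, h2⟩ := hp
  have hint : S1 ∩ S2 ⊆ {z'} := by
    rintro t ⟨ht1, ht2⟩
    by_contra htz
    have htz' : t ≠ z' := by simpa using htz
    obtain ⟨S1', hsub1, hz1, hsp1⟩ := h1.drop_ne_head ht1 htz'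
    obtain ⟨S2', hsub2, hz2, hsp2⟩ := h2.drop_ne_head ht2 htz'
    have hmem : ((t, S1', S2') : V × Set V × Set V) ∈ 𝒞 := ⟨hsp1, hsp2⟩
    have hsub12 : S1' ∪ S2' ⊆ S1 ∪ S2 := by
      rintro x (hx | hx)
      · exact Or.inl (hsub1 hx)
      · exact Or.inr (hsub2 hx)
    have hss : S1' ∪ S2' ⊂ S1 ∪ S2 :=
      (Set.ssubset_iff_of_subset hsub12).2
        ⟨z', Or.inl h1.head_mem, fun hc => hc.elim hz1 hz2⟩
    have hlt := Set.ncard_lt_ncard hss (Set.toFinite _)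
    have := hmin _ hmem (le_of_lt hlt)
    simp only at this hlt
    omega
  have hyS : ∀ b S', SP r z' b S' → r b y → y ∉ S' := by
    intro b S' hS' hby hy
    obtain ⟨W, -, hW⟩ := hS'.drop y hy
    have heq : b = y := (hanti _ _ hW.to_rtg (Relation.ReflTransGen.single hby)).symm
    exact hirr y (heq ▸ hby)
  have hyS1 : y ∉ S1 := hyS _ _ h1 hy1
  have hyS2 : y ∉ S2 := hyS _ _ h2 hy2
  have hP : SP (UAdj A) z' y (insert y S1) :=
    (h1.mono hsub).snoc y (hsub _ _ hy1) hyS1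
  have hQ : SP (UAdj A) z' y (insert y S2) :=
    (h2.mono hsub).snoc y (hsub _ _ hy2) hyS2
  have hzy : z' ≠ y := fun h => hyS1 (h ▸ h1.head_mem)
  have hint2 : (insert y S1) ∩ (insert y S2) ⊆ {z', y} := by
    rintro x ⟨hx1, hx2⟩
    rcases hx1 with rfl | hx1
    · exact Or.inr rfl
    rcases hx2 with rfl | hx2
    · exact Or.inr rfl
    · exact Or.inl (hint ⟨hx1, hx2⟩)
  have hbc := twopath_biconn hP hQ hint2 hzy
  obtain ⟨B, hB, hBs⟩ := exists_biconnComp hbc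
  refine ⟨B, hB, hBs (Or.inl (Set.mem_insert _ _)), ?_⟩
  exact three_le_ncard (hBs (Or.inl (Set.mem_insert _ _)))
    (hBs (Or.inl (Set.mem_insert_of_mem _ h1.last_mem)))
    (hBs (Or.inr (Set.mem_insert_of_mem _ h2.last_mem)))
    (fun h => hyS1 (h ▸ h1.last_mem)) (fun h => hyS2 (h ▸ h2.last_mem)) ha

end Merge

section NetMerge

variable {V L : Type} (N : PhyloNetwork V L)

lemma retic_in_ntb {v : V} (hv : IsRetic N.arcs v) : ∃ B ∈ NTB N, v ∈ B := by
  haveI := N.vfin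
  obtain ⟨u1, u2, hu12, hset⟩ := Set.ncard_eq_two.1 hv.1
  have h1 : (u1, v) ∈ N.arcs := by
    have : u1 ∈ {u | (u, v) ∈ N.arcs} := hset ▸ (by simp)
    exact this
  have h2 : (u2, v) ∈ N.arcs := by
    have : u2 ∈ {u | (u, v) ∈ N.arcs} := hset ▸ (by simp)
    exact this
  obtain ⟨rt, hrt⟩ := N.root_ex
  obtain ⟨B, hB, hvB, h3⟩ := merge_block (A := N.arcs)
    (r := fun a b => (a, b) ∈ N.arcs)
    (fun a b h => Or.inl h) (no_self_loop N.acyclic)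
    (fun a b h h' => reaches_antisymm N.acyclic h h')
    (root_reaches_all N hrt u1) (root_reaches_all N hrt u2) hu12 h1 h2
  exact ⟨B, ⟨hB, h3⟩, hvB⟩

lemma apex_in_ntb {v c1 c2 y : V} (h1 : (v, c1) ∈ N.arcs) (h2 : (v, c2) ∈ N.arcs)
    (hc : c1 ≠ c2) (hr1 : Reaches N.arcs c1 y) (hr2 : Reaches N.arcs c2 y) :
    ∃ B ∈ NTB N, v ∈ B := by
  haveI := N.vfin
  obtain ⟨B, hB, hvB, h3⟩ := merge_block (A := N.arcs)
    (r := fun a b => (b, a) ∈ N.arcs)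
    (fun a b h => Or.inr h) (no_self_loop N.acyclic)
    (fun a b h h' => reaches_antisymm N.acyclic
      (Relation.reflTransGen_swap.2 h') (Relation.reflTransGen_swap.2 h))
    (Relation.reflTransGen_swap.2 hr1) (Relation.reflTransGen_swap.2 hr2) hc h1 h2
  exact ⟨B, ⟨hB, h3⟩, hvB⟩

end NetMerge
section Counting

variable {V : Type} [Finite V]

lemma ncard_biUnion_le {ι : Type} (s : Finset ι) (f : ι → Set V) :
    (⋃ i ∈ s, f i).ncard ≤ ∑ i ∈ s, (f i).ncard := by
  classical
  induction s using Finset.induction_on with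
  | empty => simp
  | @insert a t ha ih =>
    rw [Finset.sum_insert ha, Finset.set_biUnion_insert]
    calc (f a ∪ ⋃ i ∈ t, f i).ncard
        ≤ (f a).ncard + (⋃ i ∈ t, f i).ncard := Set.ncard_union_le _ _
      _ ≤ (f a).ncard + ∑ i ∈ t, (f i).ncard := by omega

lemma sum_ncard_le_of_disjoint {ι : Type} (s : Finset ι) (f : ι → Set V) (T : Set V)
    (hsub : ∀ i ∈ s, f i ⊆ T)
    (hdis : ∀ i ∈ s, ∀ j ∈ s, i ≠ j → f i ∩ f j = ∅) :
    ∑ i ∈ s, (f i).ncard ≤ T.ncard := by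
  classical
  induction s using Finset.induction_on generalizing T with
  | empty => simp
  | @insert a t ha ih =>
    rw [Finset.sum_insert ha]
    have h1 : ∀ i ∈ t, f i ⊆ T \ f a := by
      intro i hi x hx
      refine ⟨hsub i (Finset.mem_insert_of_mem hi) hx, fun hxa => ?_⟩
      have : x ∈ f a ∩ f i := ⟨hxa, hx⟩
      rw [hdis a (Finset.mem_insert_self _ _) i (Finset.mem_insert_of_mem hi)
        (fun h => ha (h ▸ hi))] at this
      exact this
    have h2 : ∀ i ∈ t, ∀ j ∈ t, i ≠ j → f i ∩ f j = ∅ := fun i hi j hj =>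
      hdis i (Finset.mem_insert_of_mem hi) j (Finset.mem_insert_of_mem hj)
    have ih' := ih (T \ f a) h1 h2
    have hfa : f a ⊆ T := hsub a (Finset.mem_insert_self _ _)
    have hd : (T \ f a).ncard = T.ncard - (f a).ncard := Set.ncard_diff hfa (Set.toFinite _)
    have hle : (f a).ncard ≤ T.ncard := Set.ncard_le_ncard hfa (Set.toFinite _)
    omega

end Counting
section Regions

variable {V L : Type} (N : PhyloNetwork V L)

/-- The set of vertices reachable from `v`. -/
def Dv (v : V) : Set V := {w | Reaches N.arcs v w}

/-- The heads of the outgoing arcs of a set `B`. -/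
def heads (B : Set V) : Set V := {x | ∃ u, u ∈ B ∧ (u, x) ∈ N.arcs ∧ x ∉ B}

lemma mem_Dv_self (v : V) : v ∈ Dv N v := Relation.ReflTransGen.refl

lemma Dv_mono {v w : V} (h : Reaches N.arcs v w) : Dv N w ⊆ Dv N v :=
  fun x hx => Relation.ReflTransGen.trans h hx

lemma Dv_ncard_lt {v w : V} (h : Reaches N.arcs v w) (hne : w ≠ v) :
    (Dv N w).ncard < (Dv N v).ncard := by
  haveI := N.vfin
  refine Set.ncard_lt_ncard ((Set.ssubset_iff_of_subset (Dv_mono N h)).2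
    ⟨v, mem_Dv_self N v, fun hc => ?_⟩) (Set.toFinite _)
  exact hne (reaches_antisymm N.acyclic hc h)

lemma heads_ncard {B : Set V} (hB : B ∈ NTB N) : 3 ≤ (heads N B).ncard := by
  haveI := N.vfin
  have hout := N.bicomp_out B hB.1 (by have := hB.2; omega)
  refine le_trans hout (Set.ncard_le_ncard_of_injOn (fun a => a.2) ?_ ?_ (Set.toFinite _))
  · rintro ⟨u, x⟩ ⟨ha, hu, hx⟩
    exact ⟨u, hu, ha, hx⟩
  · rintro ⟨u1, x1⟩ ⟨ha1, hu1, hx1⟩ ⟨u2, x2⟩ ⟨ha2, hu2, hx2⟩ heq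
    simp only at heq
    subst heq
    by_cases h12 : u1 = u2
    · rw [h12]
    · exfalso
      have hxB := hB.1.absorb_vertex h12 hu1 hu2 (Or.inr ha1) (Or.inr ha2)
        (fun h => hx1 (h ▸ hu1)) (fun h => hx1 (h ▸ hu2))
      exact hx1 hxB

lemma head_region_avoid {B : Set V} (hB : BiconnComp N.arcs B) {u x w : V}
    (hu : u ∈ B) (harc : (u, x) ∈ N.arcs) (hx : x ∉ B) (hw : Reaches N.arcs x w) :
    w ∉ B := by
  haveI := N.vfin
  intro hwB
  obtain ⟨S, hS⟩ := SP.of_rtg (r := fun a b => (a, b) ∈ N.arcs) hw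
  have huS : u ∉ S := by
    intro huS
    obtain ⟨W, -, hW⟩ := hS.pre u huS
    exact N.acyclic u x harc hW.to_rtg
  have hpath : SP (UAdj N.arcs) u w (insert u S) :=
    .cons (Or.inl harc) (hS.mono (fun a b h => Or.inl h)) huS
  have := hB.absorb_path hpath hu hwB
  exact hx (this (Set.mem_insert_of_mem _ hS.head_mem))

lemma exit_exists {B : Set V} {u0 w : V} (h : Reaches N.arcs u0 w)
    (hu0 : u0 ∈ B) (hw : w ∉ B) :
    ∃ x ∈ heads N B, Reaches N.arcs u0 x ∧ Reaches N.arcs x w := by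
  induction h using Relation.ReflTransGen.head_induction_on with
  | refl => exact absurd hu0 hw
  | @head a c hac hcw ih =>
    by_cases hc : c ∈ B
    · obtain ⟨x, hx, hax, hxw⟩ := ih hc
      exact ⟨x, hx, Relation.ReflTransGen.head hac hax, hxw⟩
    · exact ⟨c, ⟨a, hu0, hac, hc⟩, Relation.ReflTransGen.single hac, hcw⟩

lemma heads_disjoint {B : Set V} (hB : B ∈ NTB N) {x1 x2 : V}
    (hx1 : x1 ∈ heads N B) (hx2 : x2 ∈ heads N B) (hne : x1 ≠ x2) :
    Dv N x1 ∩ Dv N x2 = ∅ := by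
  haveI := N.vfin
  classical
  obtain ⟨u1, hu1B, ha1, hx1B⟩ := hx1
  obtain ⟨u2, hu2B, ha2, hx2B⟩ := hx2
  by_contra hcon
  obtain ⟨y, hy1, hy2⟩ := Set.nonempty_iff_ne_empty.2 hcon
  -- case u1 = u2 : degree contradiction
  by_cases h12 : u1 = u2
  · subst h12
    obtain ⟨w1, w2, hw12, hw1B, hw2B, hw1u, hw2u, hb1, hb2⟩ :=
      two_nbrs_in hu1B hB.1.1 hB.2 (not_uadj_self N u1)
    have h4 : 4 ≤ {w | UAdj N.arcs u1 w}.ncard := by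
      refine four_le_ncard (a := w1) (b := w2) (c := x1) (d := x2)
        hb1 hb2 (Or.inl ha1) (Or.inl ha2) hw12
        (fun h => hx1B (h ▸ hw1B)) (fun h => hx2B (h ▸ hw1B))
        (fun h => hx1B (h ▸ hw2B)) (fun h => hx2B (h ▸ hw2B)) hne
    have h3 := nbrs_ncard_le_three N u1
    omega
  -- case u1 ≠ u2 : build an undirected path from u1 to u2 avoiding B
  · set r : V → V → Prop := fun a b => (a, b) ∈ N.arcs with hr
    set 𝒞 : Set (V × Set V × Set V) :=
      {p | SP r x1 p.1 p.2.1 ∧ SP r x2 p.1 p.2.2} with h𝒞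
    have hne𝒞 : 𝒞.Nonempty := by
      obtain ⟨S1, h1⟩ := SP.of_rtg (r := r) hy1
      obtain ⟨S2, h2⟩ := SP.of_rtg (r := r) hy2
      exact ⟨(y, S1, S2), h1, h2⟩
    obtain ⟨p, hp, hmin⟩ : ∃ p ∈ 𝒞, ∀ a' ∈ 𝒞, (a'.2.1 ∪ a'.2.2).ncard ≤ (p.2.1 ∪ p.2.2).ncard →
        (p.2.1 ∪ p.2.2).ncard = (a'.2.1 ∪ a'.2.2).ncard := by
      obtain ⟨p, hp, h⟩ := Set.Finite.exists_minimalFor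
        (fun p : V × Set V × Set V => (p.2.1 ∪ p.2.2).ncard) _ (Set.toFinite 𝒞) hne𝒞
      exact ⟨p, hp, fun a' ha h' => le_antisymm (h ha h') h'⟩
    obtain ⟨y', S1, S2⟩ := p
    obtain ⟨h1, h2⟩ := hp
    have hint : S1 ∩ S2 ⊆ {y'} := by
      rintro t ⟨ht1, ht2⟩
      by_contra htz
      have htz' : t ≠ y' := by simpa using htz
      obtain ⟨S1', hsub1, hsp1⟩ := h1.pre t ht1
      obtain ⟨S2', hsub2, hsp2⟩ := h2.pre t ht2
      have hy'1 : y' ∉ S1' := by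
        intro hc
        obtain ⟨W, -, hW⟩ := hsp1.drop y' hc
        obtain ⟨W2, -, hW2⟩ := h1.drop t ht1
        exact htz' (reaches_antisymm N.acyclic hW2.to_rtg hW.to_rtg)
      have hy'2 : y' ∉ S2' := by
        intro hc
        obtain ⟨W, -, hW⟩ := hsp2.drop y' hc
        obtain ⟨W2, -, hW2⟩ := h2.drop t ht2
        exact htz' (reaches_antisymm N.acyclic hW2.to_rtg hW.to_rtg)
      have hmem : ((t, S1', S2') : V × Set V × Set V) ∈ 𝒞 := ⟨hsp1, hsp2⟩
      have hsub12 : S1' ∪ S2' ⊆ S1 ∪ S2 := by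
        rintro x (hx | hx)
        · exact Or.inl (hsub1 hx)
        · exact Or.inr (hsub2 hx)
      have hss : S1' ∪ S2' ⊂ S1 ∪ S2 :=
        (Set.ssubset_iff_of_subset hsub12).2
          ⟨y', Or.inl h1.last_mem, fun hc => hc.elim hy'1 hy'2⟩
      have hlt := Set.ncard_lt_ncard hss (Set.toFinite _)
      have := hmin _ hmem (le_of_lt hlt)
      simp only at this hlt
      omega
    -- the paths avoid B
    have havoid : ∀ (xx uu : V) (S : Set V), SP r xx y' S → uu ∈ B →
        (uu, xx) ∈ N.arcs → xx ∉ B → S ∩ B = ∅ := by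
      intro xx uu S hS huu harc hxx
      rw [Set.eq_empty_iff_forall_notMem]
      rintro a ⟨haS, haB⟩
      obtain ⟨W, -, hW⟩ := hS.pre a haS
      exact head_region_avoid N hB.1 huu harc hxx hW.to_rtg haB
    have hS1B : S1 ∩ B = ∅ := havoid x1 u1 S1 h1 hu1B ha1 hx1B
    have hS2B : S2 ∩ B = ∅ := havoid x2 u2 S2 h2 hu2B ha2 hx2B
    have hu1S1 : u1 ∉ S1 := fun hc => (Set.eq_empty_iff_forall_notMem.1 hS1B u1) ⟨hc, hu1B⟩
    have hu1S2 : u1 ∉ S2 := fun hc => (Set.eq_empty_iff_forall_notMem.1 hS2B u1) ⟨hc, hu1B⟩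
    have hu2S1 : u2 ∉ S1 := fun hc => (Set.eq_empty_iff_forall_notMem.1 hS1B u2) ⟨hc, hu2B⟩
    have hu2S2 : u2 ∉ S2 := fun hc => (Set.eq_empty_iff_forall_notMem.1 hS2B u2) ⟨hc, hu2B⟩
    -- assemble the undirected path u1 - x1 ⇝ y' ⇝ x2 - u2
    have hP1 : SP (UAdj N.arcs) u1 y' (insert u1 S1) :=
      .cons (Or.inl ha1) (h1.mono (fun a b h => Or.inl h)) hu1S1
    have hP2 : SP (UAdj N.arcs) y' u2 (insert u2 S2) := by
      have := (h2.mono (fun a b h => (Or.inl h : UAdj N.arcs a b))).rev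
        (fun a b h => UAdj.symm' h)
      exact this.snoc u2 (Or.inr ha2) hu2S2
    have hintP : (insert u1 S1) ∩ (insert u2 S2) ⊆ {y'} := by
      rintro a ⟨ha1', ha2'⟩
      rcases ha1' with rfl | ha1'
      · rcases ha2' with rfl | ha2'
        · exact absurd rfl h12
        · exact absurd ha2' hu1S2
      · rcases ha2' with rfl | ha2'
        · exact absurd ha1' hu2S1
        · exact hint ⟨ha1', ha2'⟩
    have hfull : SP (UAdj N.arcs) u1 u2 ((insert u1 S1) ∪ (insert u2 S2)) :=
      hP1.append _ _ hP2 hintP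
    have habs := hB.1.absorb_path hfull hu1B hu2B
    exact hx1B (habs (Or.inl (Set.mem_insert_of_mem _ h1.head_mem)))

/-- A connected set covered by a disjoint family of reachability-closed regions
lies in a single region. -/
lemma conn_single_region (ℛ : Set (Set V))
    (hclosed : ∀ R ∈ ℛ, ∀ a b, a ∈ R → (a, b) ∈ N.arcs → b ∈ R)
    (hdis : ∀ R ∈ ℛ, ∀ R' ∈ ℛ, R ≠ R' → R ∩ R' = ∅)
    {T : Set V} (hT : ConnWithin N.arcs T) (hcov : T ⊆ ⋃₀ ℛ) (hne : T.Nonempty) :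
    ∃ R ∈ ℛ, T ⊆ R := by
  obtain ⟨w0, hw0⟩ := hne
  obtain ⟨R0, hR0, hw0R⟩ := hcov hw0
  refine ⟨R0, hR0, fun w hw => ?_⟩
  have hchain := hT w0 hw0 w hw
  clear hw
  induction hchain with
  | refl => exact hw0R
  | @tail b c hb hstep ih =>
    obtain ⟨Rc, hRc, hcRc⟩ := hcov hstep.2.1
    rcases hstep.2.2 with harc | harc
    · exact hclosed R0 hR0 b c ih harc
    · by_cases hReq : Rc = R0
      · exact hReq ▸ hcRc
      · exfalso
        have hbRc : b ∈ Rc := hclosed Rc hRc c b hcRc harc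
        have := hdis Rc hRc R0 hR0 hReq
        exact (Set.eq_empty_iff_forall_notMem.1 this b) ⟨hbRc, ih⟩

end Regions
section MainInduction

variable {V L : Type} (N : PhyloNetwork V L)

/-- Leaves reachable from `v`. -/
def lset (v : V) : Set V := {w | w ∈ Dv N v ∧ IsLeafV N.arcs w}

/-- Nontrivial blocks entirely below `v`. -/
def gset (v : V) : Set (Set V) := {B | B ∈ NTB N ∧ B ⊆ Dv N v}

lemma main_induction (v : V) : (gset N v).ncard + 1 ≤ (lset N v).ncard := by
  haveI := N.vfin
  classical
  have H : ∀ m, ∀ v : V, (Dv N v).ncard ≤ m →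
      (gset N v).ncard + 1 ≤ (lset N v).ncard := by
    intro m
    induction m with
    | zero =>
      intro v hv
      have h0 : (Dv N v) = ∅ :=
        Set.ncard_eq_zero (Set.toFinite _) |>.1 (Nat.le_zero.1 hv)
      exact absurd (h0 ▸ mem_Dv_self N v) (Set.notMem_empty v)
    | succ m ih =>
      intro v hv
      by_cases hvB : ∃ B ∈ NTB N, v ∈ B
      · -- v lies in a nontrivial block B
        obtain ⟨B, hBmem, hvB'⟩ := hvB
        set Hv : Set V := {x | x ∈ heads N B ∧ x ∈ Dv N v} with hHv
        set Hf : Finset V := (Set.toFinite Hv).toFinset with hHf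
        have hHfmem : ∀ x, x ∈ Hf ↔ x ∈ Hv := fun x => Set.Finite.mem_toFinset _
        -- decomposition
        have hdec : ∀ w ∈ Dv N v, w ∉ B → ∃ x ∈ Hv, w ∈ Dv N x := by
          intro w hw hwB
          obtain ⟨x, hx, hvx, hxw⟩ := exit_exists N hw hvB' hwB
          exact ⟨x, ⟨hx, hvx⟩, hxw⟩
        -- measure decreases
        have hmeas : ∀ x ∈ Hv, (Dv N x).ncard ≤ m := by
          intro x hx
          obtain ⟨u, huB, harc, hxB⟩ := hx.1
          have hxv : x ≠ v := fun h => hxB (h ▸ hvB')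
          have := Dv_ncard_lt N hx.2 hxv
          omega
        -- IH for heads
        have hIH : ∀ x ∈ Hf, (gset N x).ncard + 1 ≤ (lset N x).ncard := by
          intro x hx
          exact ih x (hmeas x ((hHfmem x).1 hx))
        -- region disjointness
        have hdisj : ∀ x ∈ Hv, ∀ x' ∈ Hv, x ≠ x' → Dv N x ∩ Dv N x' = ∅ :=
          fun x hx x' hx' hne => heads_disjoint N hBmem hx.1 hx'.1 hne
        -- leaf sums
        have hlsub : ∀ x ∈ Hf, lset N x ⊆ lset N v := by
          intro x hx w hw
          exact ⟨Dv_mono N ((hHfmem x).1 hx).2 hw.1, hw.2⟩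
        have hldisj : ∀ x ∈ Hf, ∀ x' ∈ Hf, x ≠ x' → lset N x ∩ lset N x' = ∅ := by
          intro x hx x' hx' hne
          rw [Set.eq_empty_iff_forall_notMem]
          rintro w ⟨hw1, hw2⟩
          have := hdisj x ((hHfmem x).1 hx) x' ((hHfmem x').1 hx') hne
          exact (Set.eq_empty_iff_forall_notMem.1 this w) ⟨hw1.1, hw2.1⟩
        have hlsum : ∑ x ∈ Hf, (lset N x).ncard ≤ (lset N v).ncard :=
          sum_ncard_le_of_disjoint Hf _ _ hlsub hldisj
        have hsum1 : (∑ x ∈ Hf, (gset N x).ncard) + Hf.card ≤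
            ∑ x ∈ Hf, (lset N x).ncard := by
          calc (∑ x ∈ Hf, (gset N x).ncard) + Hf.card
              = ∑ x ∈ Hf, ((gset N x).ncard + 1) := by
                rw [Finset.sum_add_distrib]; simp
            _ ≤ ∑ x ∈ Hf, (lset N x).ncard := Finset.sum_le_sum hIH
        -- cover of the blocks below v
        have hcover : ∀ B' ∈ gset N v, B' ≠ B → ∃ x ∈ Hf, B' ∈ gset N x := by
          rintro B' ⟨hB'm, hB'sub⟩ hne
          have hdisBB : B' ∩ B = ∅ := ntb_disjoint N hB'm hBmem hne
          have hcov : B' ⊆ ⋃₀ ((fun x => Dv N x) '' Hv) := by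
            intro w hw
            have hwB : w ∉ B := fun hc =>
              (Set.eq_empty_iff_forall_notMem.1 hdisBB w) ⟨hw, hc⟩
            obtain ⟨x, hx, hwx⟩ := hdec w (hB'sub hw) hwB
            exact ⟨Dv N x, Set.mem_image_of_mem _ hx, hwx⟩
          have hne' : B'.Nonempty := by
            apply Set.nonempty_of_ncard_ne_zero
            have := hB'm.2
            omega
          obtain ⟨R, hR, hBR⟩ := conn_single_region N ((fun x => Dv N x) '' Hv)
            (by rintro R ⟨x, hx, rfl⟩ a b ha harc
                exact Relation.ReflTransGen.tail ha harc)
            (by rintro R ⟨x, hx, rfl⟩ R' ⟨x', hx', rfl⟩ hne''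
                have hxx : x ≠ x' := fun h => hne'' (h ▸ rfl)
                exact hdisj x hx x' hx' hxx)
            (by obtain ⟨⟨⟨-, h, -⟩, -⟩, -⟩ := hB'm; exact h) hcov hne'
          obtain ⟨x, hx, rfl⟩ := hR
          exact ⟨x, (hHfmem x).2 hx, hB'm, hBR⟩
        by_cases hBv : B ⊆ Dv N v
        · -- B itself is counted; at least 3 heads
          have hHvall : Hv = heads N B := by
            ext x
            refine ⟨fun hx => hx.1, fun hx => ⟨hx, ?_⟩⟩
            obtain ⟨u, huB, harc, hxB⟩ := hx
            exact Relation.ReflTransGen.tail (hBv huB) harc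
          have hHcard : 3 ≤ Hf.card := by
            have h1 : Hv.ncard = Hf.card := Set.ncard_eq_toFinset_card _ (Set.toFinite Hv)
            have h2 : 3 ≤ Hv.ncard := by rw [hHvall]; exact heads_ncard N hBmem
            omega
          have hgcov : gset N v ⊆ {B} ∪ ⋃ x ∈ Hf, gset N x := by
            intro B' hB'
            by_cases hBB : B' = B
            · exact Or.inl (by simp [hBB])
            · obtain ⟨x, hx, hgx⟩ := hcover B' hB' hBB
              exact Or.inr (Set.mem_biUnion hx hgx)
          have hg_le : (gset N v).ncard ≤ 1 + ∑ x ∈ Hf, (gset N x).ncard := by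
            calc (gset N v).ncard
                ≤ ({B} ∪ ⋃ x ∈ Hf, gset N x).ncard :=
                  Set.ncard_le_ncard hgcov (Set.toFinite _)
              _ ≤ ({B} : Set (Set V)).ncard + (⋃ x ∈ Hf, gset N x).ncard :=
                  Set.ncard_union_le _ _
              _ ≤ 1 + ∑ x ∈ Hf, (gset N x).ncard := by
                  have := ncard_biUnion_le Hf (fun x => gset N x)
                  rw [Set.ncard_singleton]
                  omega
          omega
        · -- B is not below v
          have hgcov : gset N v ⊆ ⋃ x ∈ Hf, gset N x := by
            intro B' hB'
            have hBB : B' ≠ B := fun h => hBv (h ▸ hB'.2)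
            obtain ⟨x, hx, hgx⟩ := hcover B' hB' hBB
            exact Set.mem_biUnion hx hgx
          have hg_le : (gset N v).ncard ≤ ∑ x ∈ Hf, (gset N x).ncard := by
            calc (gset N v).ncard
                ≤ (⋃ x ∈ Hf, gset N x).ncard :=
                  Set.ncard_le_ncard hgcov (Set.toFinite _)
              _ ≤ ∑ x ∈ Hf, (gset N x).ncard := ncard_biUnion_le Hf _
          have hHne : 1 ≤ Hf.card := by
            obtain ⟨w, hwleaf, hvw⟩ := exists_leaf_below N v
            have hwB : w ∉ B := leaf_not_in_ntb N hwleaf hBmem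
            obtain ⟨x, hx, -⟩ := hdec w hvw hwB
            have : x ∈ Hf := (hHfmem x).2 hx
            exact Finset.card_pos.2 ⟨x, this⟩
          omega
      · -- v is in no nontrivial block
        push_neg at hvB
        by_cases hz : outdeg N.arcs v = 0
        · -- v is a leaf
          have hDv : Dv N v = {v} := by
            ext w
            refine ⟨fun hw => ?_, fun hw => by rw [hw]; exact mem_Dv_self N v⟩
            rcases Relation.ReflTransGen.cases_head hw with rfl | ⟨c, hc, -⟩
            · rfl
            · exact absurd hc ((outdeg_zero_iff (A := N.arcs)).1 hz c)
          have hgz : (gset N v).ncard = 0 := by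
            rw [Set.ncard_eq_zero (Set.toFinite _)]
            rw [Set.eq_empty_iff_forall_notMem]
            rintro B' ⟨hB'm, hB'sub⟩
            have h1 : B'.ncard ≤ 1 := by
              calc B'.ncard ≤ ({v} : Set V).ncard :=
                    Set.ncard_le_ncard (hDv ▸ hB'sub) (Set.toFinite _)
                _ = 1 := Set.ncard_singleton v
            have := hB'm.2
            omega
          have hl1 : 1 ≤ (lset N v).ncard :=
            (Set.ncard_pos (Set.toFinite _)).2 ⟨v, mem_Dv_self N v, leaf_of_outdeg_zero N hz⟩
          omega
        · -- v has children
          set C : Set V := {c | (v, c) ∈ N.arcs} with hC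
          set Cf : Finset V := (Set.toFinite C).toFinset with hCf
          have hCfmem : ∀ x, x ∈ Cf ↔ x ∈ C := fun x => Set.Finite.mem_toFinset _
          have hdec : ∀ w ∈ Dv N v, w ≠ v → ∃ c ∈ C, w ∈ Dv N c := by
            intro w hw hwv
            rcases Relation.ReflTransGen.cases_head hw with rfl | ⟨c, hc, hcw⟩
            · exact absurd rfl hwv
            · exact ⟨c, hc, hcw⟩
          have hdisj : ∀ c ∈ C, ∀ c' ∈ C, c ≠ c' → Dv N c ∩ Dv N c' = ∅ := by
            intro c hc c' hc' hne
            rw [Set.eq_empty_iff_forall_notMem]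
            rintro y ⟨hy1, hy2⟩
            obtain ⟨B, hB, hvB'⟩ := apex_in_ntb N hc hc' hne hy1 hy2
            exact hvB B hB hvB'
          have hmeas : ∀ c ∈ C, (Dv N c).ncard ≤ m := by
            intro c hc
            have hc' : (v, c) ∈ N.arcs := hc
            have hcv : c ≠ v := fun h => no_self_loop N.acyclic v (by rw [h] at hc'; exact hc')
            have := Dv_ncard_lt N (Relation.ReflTransGen.single hc') hcv
            omega
          have hIH : ∀ c ∈ Cf, (gset N c).ncard + 1 ≤ (lset N c).ncard := by
            intro c hc
            exact ih c (hmeas c ((hCfmem c).1 hc))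
          have hlsub : ∀ c ∈ Cf, lset N c ⊆ lset N v := by
            intro c hc w hw
            exact ⟨Relation.ReflTransGen.head ((hCfmem c).1 hc) hw.1, hw.2⟩
          have hldisj : ∀ c ∈ Cf, ∀ c' ∈ Cf, c ≠ c' → lset N c ∩ lset N c' = ∅ := by
            intro c hc c' hc' hne
            rw [Set.eq_empty_iff_forall_notMem]
            rintro w ⟨hw1, hw2⟩
            have := hdisj c ((hCfmem c).1 hc) c' ((hCfmem c').1 hc') hne
            exact (Set.eq_empty_iff_forall_notMem.1 this w) ⟨hw1.1, hw2.1⟩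
          have hlsum : ∑ c ∈ Cf, (lset N c).ncard ≤ (lset N v).ncard :=
            sum_ncard_le_of_disjoint Cf _ _ hlsub hldisj
          have hsum1 : (∑ c ∈ Cf, (gset N c).ncard) + Cf.card ≤
              ∑ c ∈ Cf, (lset N c).ncard := by
            calc (∑ c ∈ Cf, (gset N c).ncard) + Cf.card
                = ∑ c ∈ Cf, ((gset N c).ncard + 1) := by
                  rw [Finset.sum_add_distrib]; simp
              _ ≤ ∑ c ∈ Cf, (lset N c).ncard := Finset.sum_le_sum hIH
          have hgcov : gset N v ⊆ ⋃ c ∈ Cf, gset N c := by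
            rintro B' ⟨hB'm, hB'sub⟩
            have hvnB : v ∉ B' := fun hc => hvB B' hB'm hc
            have hcov : B' ⊆ ⋃₀ ((fun c => Dv N c) '' C) := by
              intro w hw
              have hwv : w ≠ v := fun h => hvnB (h ▸ hw)
              obtain ⟨c, hc, hwc⟩ := hdec w (hB'sub hw) hwv
              exact ⟨Dv N c, Set.mem_image_of_mem _ hc, hwc⟩
            have hne' : B'.Nonempty := by
              apply Set.nonempty_of_ncard_ne_zero
              have := hB'm.2
              omega
            obtain ⟨R, hR, hBR⟩ := conn_single_region N ((fun c => Dv N c) '' C)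
              (by rintro R ⟨c, hc, rfl⟩ a b ha harc
                  exact Relation.ReflTransGen.tail ha harc)
              (by rintro R ⟨c, hc, rfl⟩ R' ⟨c', hc', rfl⟩ hne''
                  have hcc : c ≠ c' := fun h => hne'' (h ▸ rfl)
                  exact hdisj c hc c' hc' hcc)
              (by obtain ⟨⟨⟨-, h, -⟩, -⟩, -⟩ := hB'm; exact h) hcov hne'
            obtain ⟨c, hc, rfl⟩ := hR
            exact Set.mem_biUnion ((hCfmem c).2 hc) ⟨hB'm, hBR⟩
          have hg_le : (gset N v).ncard ≤ ∑ c ∈ Cf, (gset N c).ncard := by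
            calc (gset N v).ncard
                ≤ (⋃ c ∈ Cf, gset N c).ncard :=
                  Set.ncard_le_ncard hgcov (Set.toFinite _)
              _ ≤ ∑ c ∈ Cf, (gset N c).ncard := ncard_biUnion_le Cf _
          have hCne : 1 ≤ Cf.card := by
            obtain ⟨c, hc⟩ := Set.nonempty_of_ncard_ne_zero hz
            exact Finset.card_pos.2 ⟨c, (hCfmem c).2 hc⟩
          omega
  exact H _ v le_rfl

end MainInduction
section DegreeCount

variable {V L : Type} (N : PhyloNetwork V L)

lemma ntb_plus_one_le_leaves :
    (NTB N).ncard + 1 ≤ {w | IsLeafV N.arcs w}.ncard := by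
  haveI := N.vfin
  obtain ⟨rt, hrt⟩ := N.root_ex
  have h := main_induction N rt
  have hg : gset N rt = NTB N := by
    ext B
    simp only [gset, Set.mem_setOf_eq, and_iff_left_iff_imp]
    intro hB w hw
    exact root_reaches_all N hrt w
  have hl : lset N rt = {w | IsLeafV N.arcs w} := by
    ext w
    simp only [lset, Set.mem_setOf_eq, and_iff_right_iff_imp]
    intro hw
    exact root_reaches_all N hrt w
  rw [hg, hl] at h
  exact h

lemma retic_le_k_ntb {k : ℕ} (hlev : IsLevel N k) :
    {v | IsRetic N.arcs v}.ncard ≤ k * (NTB N).ncard := by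
  haveI := N.vfin
  classical
  set Bf : Finset (Set V) := (Set.toFinite (NTB N)).toFinset with hBf
  have hBfmem : ∀ B, B ∈ Bf ↔ B ∈ NTB N := fun B => Set.Finite.mem_toFinset _
  have hcov : {v | IsRetic N.arcs v} ⊆ ⋃ B ∈ Bf, {v ∈ B | IsRetic N.arcs v} := by
    intro v hv
    obtain ⟨B, hB, hvB⟩ := retic_in_ntb N hv
    exact Set.mem_biUnion ((hBfmem B).2 hB) ⟨hvB, hv⟩
  calc {v | IsRetic N.arcs v}.ncard
      ≤ (⋃ B ∈ Bf, {v ∈ B | IsRetic N.arcs v}).ncard :=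
        Set.ncard_le_ncard hcov (Set.toFinite _)
    _ ≤ ∑ B ∈ Bf, {v ∈ B | IsRetic N.arcs v}.ncard := ncard_biUnion_le Bf _
    _ ≤ Bf.card * k := by
        refine Finset.sum_le_card_nsmul Bf _ k ?_
        intro B hB
        exact hlev B ((hBfmem B).1 hB).1
    _ = k * (NTB N).ncard := by
        rw [Nat.mul_comm, Set.ncard_eq_toFinset_card _ (Set.toFinite (NTB N))]

lemma arcs_card_eq_sum_indeg [Fintype V] :
    N.arcs.ncard = ∑ v : V, indeg N.arcs v := by
  classical
  set Af : Finset (V × V) := (Set.toFinite N.arcs).toFinset with hAf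
  have hAfmem : ∀ a, a ∈ Af ↔ a ∈ N.arcs := fun a => Set.Finite.mem_toFinset _
  have h1 : N.arcs.ncard = Af.card := Set.ncard_eq_toFinset_card _ _
  rw [h1]
  rw [Finset.card_eq_sum_card_fiberwise
    (f := Prod.snd) (t := Finset.univ) (fun a _ => Finset.mem_univ _)]
  refine Finset.sum_congr rfl ?_
  intro v _
  rw [indeg, Set.ncard_eq_toFinset_card _ (Set.toFinite _)]
  refine Finset.card_bij (fun a _ => a.1) ?_ ?_ ?_
  · rintro ⟨a1, a2⟩ ha
    simp only [Finset.mem_filter] at ha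
    obtain ⟨haA, ha2⟩ := ha
    have : (a1, a2) ∈ N.arcs := (hAfmem _).1 haA
    rw [Set.Finite.mem_toFinset]
    simp only [Set.mem_setOf_eq]
    rwa [← ha2]
  · rintro ⟨a1, a2⟩ ha ⟨b1, b2⟩ hb hab
    simp only [Finset.mem_filter] at ha hb
    simp only at hab
    rw [Prod.ext_iff]
    exact ⟨hab, ha.2.trans hb.2.symm⟩
  · intro u hu
    rw [Set.Finite.mem_toFinset] at hu
    refine ⟨(u, v), ?_, rfl⟩
    exact Finset.mem_filter.2 ⟨(hAfmem _).2 hu, rfl⟩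

lemma arcs_card_eq_sum_outdeg [Fintype V] :
    N.arcs.ncard = ∑ v : V, outdeg N.arcs v := by
  classical
  set Af : Finset (V × V) := (Set.toFinite N.arcs).toFinset with hAf
  have hAfmem : ∀ a, a ∈ Af ↔ a ∈ N.arcs := fun a => Set.Finite.mem_toFinset _
  have h1 : N.arcs.ncard = Af.card := Set.ncard_eq_toFinset_card _ _
  rw [h1]
  rw [Finset.card_eq_sum_card_fiberwise
    (f := Prod.fst) (t := Finset.univ) (fun a _ => Finset.mem_univ _)]
  refine Finset.sum_congr rfl ?_
  intro v _
  rw [outdeg, Set.ncard_eq_toFinset_card _ (Set.toFinite _)]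
  refine Finset.card_bij (fun a _ => a.2) ?_ ?_ ?_
  · rintro ⟨a1, a2⟩ ha
    simp only [Finset.mem_filter] at ha
    obtain ⟨haA, ha1⟩ := ha
    have : (a1, a2) ∈ N.arcs := (hAfmem _).1 haA
    rw [Set.Finite.mem_toFinset]
    simp only [Set.mem_setOf_eq]
    rwa [← ha1]
  · rintro ⟨a1, a2⟩ ha ⟨b1, b2⟩ hb hab
    simp only [Finset.mem_filter] at ha hb
    simp only at hab
    rw [Prod.ext_iff]
    exact ⟨ha.2.trans hb.2.symm, hab⟩
  · intro u hu
    rw [Set.Finite.mem_toFinset] at hu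
    refine ⟨(v, u), ?_, rfl⟩
    exact Finset.mem_filter.2 ⟨(hAfmem _).2 hu, rfl⟩

end DegreeCount
section FinalHelpers

variable {V : Type}

lemma filter_card_eq_ncard [Fintype V] (p : V → Prop) [DecidablePred p] :
    ({v | p v}).ncard = (Finset.univ.filter p).card := by
  rw [Set.ncard_eq_toFinset_card _ (Set.toFinite _)]
  have h : (Set.toFinite {v | p v}).toFinset = Finset.univ.filter p := by
    ext v
    simp [Set.Finite.mem_toFinset]
  rw [h]

end FinalHelpers
/-- A level-`k` phylogenetic network with `n` leaves has at most
`n + (n-1)(3k-1) + (2n-2)` vertices and at most `(2n-2) + (n-1)(9k-3)/2 + (2n-2)` arcs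
(in particular, `O(n)` vertices and arcs). -/
theorem levelk_network_size_bound (V L : Type) (N : PhyloNetwork V L) (k n : ℕ)
    (hk : 1 ≤ k) (hlev : IsLevel N k)
    (hn : {v : V | IsLeafV N.arcs v}.ncard = n) :
    (Nat.card V : ℚ) ≤ n + (n - 1) * (3 * k - 1) + (2 * n - 2) ∧
    (N.arcs.ncard : ℚ) ≤ (2 * n - 2) + (n - 1) * (9 * k - 3) / 2 + (2 * n - 2) := by
  classical
  haveI := N.vfin
  haveI : Fintype V := Fintype.ofFinite V
  set A := N.arcs with hA
  set Rt : Finset V := Finset.univ.filter (fun v => IsRoot A v) with hRtd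
  set Sp : Finset V := Finset.univ.filter (fun v => IsSplit A v) with hSpd
  set Re : Finset V := Finset.univ.filter (fun v => IsRetic A v) with hRed
  set Lf : Finset V := Finset.univ.filter (fun v => IsLeafV A v) with hLfd
  have hex12 : ∀ v : V, IsRoot A v → ¬ IsSplit A v := fun v h h' => by
    have := h.1; have := h'.1; omega
  have hex13 : ∀ v : V, IsRoot A v → ¬ IsRetic A v := fun v h h' => by
    have := h.1; have := h'.1; omega
  have hex14 : ∀ v : V, IsRoot A v → ¬ IsLeafV A v := fun v h h' => by
    have := h.1; have := h'.1; omega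
  have hex23 : ∀ v : V, IsSplit A v → ¬ IsRetic A v := fun v h h' => by
    have := h.1; have := h'.1; omega
  have hex24 : ∀ v : V, IsSplit A v → ¬ IsLeafV A v := fun v h h' => by
    have := h.2; have := h'.2; omega
  have hex34 : ∀ v : V, IsRetic A v → ¬ IsLeafV A v := fun v h h' => by
    have := h.1; have := h'.1; omega
  have hpt1 : ∀ v : V, (if IsRoot A v then 1 else 0) + (if IsSplit A v then 1 else 0)
      + (if IsRetic A v then 1 else 0) + (if IsLeafV A v then 1 else 0) = 1 := by
    intro v
    rcases N.vertex_type v with hv | hv | hv | hv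
    · rw [if_pos hv, if_neg (hex12 v hv), if_neg (hex13 v hv), if_neg (hex14 v hv)]
    · rw [if_neg (fun h => hex12 v h hv), if_pos hv, if_neg (hex23 v hv),
        if_neg (hex24 v hv)]
    · rw [if_neg (fun h => hex13 v h hv), if_neg (fun h => hex23 v h hv), if_pos hv,
        if_neg (hex34 v hv)]
    · rw [if_neg (fun h => hex14 v h hv), if_neg (fun h => hex24 v h hv),
        if_neg (fun h => hex34 v h hv), if_pos hv]
  have hpt2 : ∀ v : V, indeg A v + (if IsRoot A v then 1 else 0)
      = 1 + (if IsRetic A v then 1 else 0) := by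
    intro v
    rcases N.vertex_type v with hv | hv | hv | hv
    · rw [hv.1, if_pos hv, if_neg (hex13 v hv)]
    · rw [hv.1, if_neg (fun h => hex12 v h hv), if_neg (hex23 v hv)]
    · rw [hv.1, if_neg (fun h => hex13 v h hv), if_pos hv]
    · rw [hv.1, if_neg (fun h => hex14 v h hv), if_neg (fun h => hex34 v h hv)]
  have hpt3 : ∀ v : V, outdeg A v + 2 * (if IsLeafV A v then 1 else 0)
      + (if IsRetic A v then 1 else 0) = 2 := by
    intro v
    rcases N.vertex_type v with hv | hv | hv | hv
    · rw [hv.2, if_neg (hex14 v hv), if_neg (hex13 v hv)]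
    · rw [hv.2, if_neg (hex24 v hv), if_neg (hex23 v hv)]
    · rw [hv.2, if_neg (hex34 v hv), if_pos hv]
    · rw [hv.2, if_pos hv, if_neg (fun h => hex34 v h hv)]
  have hF2 : A.ncard + Rt.card = Fintype.card V + Re.card := by
    rw [arcs_card_eq_sum_indeg N]
    calc (∑ v : V, indeg A v) + Rt.card
        = ∑ v : V, (indeg A v + if IsRoot A v then 1 else 0) := by
          rw [hRtd, Finset.card_filter, ← Finset.sum_add_distrib]
      _ = ∑ v : V, (1 + if IsRetic A v then 1 else 0) :=
          Finset.sum_congr rfl (fun v _ => hpt2 v)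
      _ = Fintype.card V + Re.card := by
          rw [Finset.sum_add_distrib, hRed, Finset.card_filter]
          simp
  have hF3 : A.ncard + 2 * Lf.card + Re.card = 2 * Fintype.card V := by
    rw [arcs_card_eq_sum_outdeg N]
    calc (∑ v : V, outdeg A v) + 2 * Lf.card + Re.card
        = ∑ v : V, (outdeg A v + 2 * (if IsLeafV A v then 1 else 0)
            + (if IsRetic A v then 1 else 0)) := by
          rw [hLfd, hRed, Finset.card_filter, Finset.card_filter, Finset.mul_sum,
            ← Finset.sum_add_distrib, ← Finset.sum_add_distrib]
      _ = ∑ _v : V, 2 := Finset.sum_congr rfl (fun v _ => hpt3 v)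
      _ = 2 * Fintype.card V := by
          rw [Finset.sum_const, Finset.card_univ, smul_eq_mul, Nat.mul_comm]
  obtain ⟨rt, hrt⟩ := N.root_ex
  have hRt1 : Rt.card = 1 := by
    have : Rt = {rt} := by
      ext v
      simp only [hRtd, Finset.mem_filter, Finset.mem_univ, true_and,
        Finset.mem_singleton]
      exact ⟨fun h => N.root_unique v rt h hrt, fun h => h ▸ hrt⟩
    rw [this, Finset.card_singleton]
  have hA2 : 2 ≤ A.ncard := by
    rw [arcs_card_eq_sum_outdeg N]
    calc 2 = outdeg A rt := hrt.2.symm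
      _ ≤ ∑ v : V, outdeg A v :=
        Finset.single_le_sum (fun i _ => Nat.zero_le _) (Finset.mem_univ rt)
  have hLfn : Lf.card = n := by
    rw [hLfd, ← filter_card_eq_ncard (fun v => IsLeafV A v)]
    exact hn
  set b := (NTB N).ncard with hb
  have hbn : b + 1 ≤ n := by
    have := ntb_plus_one_le_leaves N
    rw [hn] at this
    exact this
  have hRer : Re.card = {v | IsRetic A v}.ncard := by
    rw [hRed, ← filter_card_eq_ncard (fun v => IsRetic A v)]
  have hrk : Re.card ≤ k * b := by
    rw [hRer]
    exact retic_le_k_ntb N hlev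
  have hrkn : Re.card ≤ k * (n - 1) :=
    le_trans hrk (Nat.mul_le_mul_left k (by omega))
  have hn2 : 2 ≤ n := by
    by_contra hcon
    push_neg at hcon
    have hb0 : b = 0 := by omega
    have hr0 : Re.card = 0 := by
      rw [hb0, Nat.mul_zero] at hrk
      omega
    omega
  have hv_eq : Fintype.card V + 1 = 2 * Re.card + 2 * n := by omega
  have hA_eq : A.ncard + 2 = 3 * Re.card + 2 * n := by omega
  have hkq : (1 : ℚ) ≤ (k : ℚ) := by exact_mod_cast hk
  have hnq : (2 : ℚ) ≤ (n : ℚ) := by exact_mod_cast hn2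
  have hrq : (Re.card : ℚ) ≤ (k : ℚ) * ((n : ℚ) - 1) := by
    have hcast : ((k * (n - 1) : ℕ) : ℚ) = (k : ℚ) * ((n : ℚ) - 1) := by
      rw [Nat.cast_mul, Nat.cast_sub (by omega : 1 ≤ n), Nat.cast_one]
    calc (Re.card : ℚ) ≤ ((k * (n - 1) : ℕ) : ℚ) := by exact_mod_cast hrkn
      _ = (k : ℚ) * ((n : ℚ) - 1) := hcast
  have hprod : (0 : ℚ) ≤ (k : ℚ) * ((n : ℚ) - 1) :=
    mul_nonneg (by linarith) (by linarith)
  constructor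
  · have h1 : (Fintype.card V : ℚ) + 1 = 2 * (Re.card : ℚ) + 2 * (n : ℚ) := by
      exact_mod_cast hv_eq
    rw [Nat.card_eq_fintype_card]
    nlinarith [h1, hrq, hkq, hnq, hprod]
  · have h2 : (A.ncard : ℚ) + 2 = 3 * (Re.card : ℚ) + 2 * (n : ℚ) := by
      exact_mod_cast hA_eq
    nlinarith [h2, hrq, hkq, hnq, hprod]

end Phylo
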